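/- Let M = SM(U) be a loopless and coloopless Schubert matroid on [n] of rank r, with n ≥ 2. Then the β-invariant β(M) equals the number of admissible Delannoy paths associated to SM(U) having no diagonal steps. -/

import Mathlib

open scoped Classical

namespace GPoly

/-- A step of a Delannoy path: east `+(1,0)`, north `+(0,1)` or diagonal `+(1,1)`. -/
inductive DStep : Type
  | east : DStep
  | north : DStep
  | diag : DStep
  deriving DecidableEq

/-- Horizontal displacement of a step. -/
def DStep.dx : DStep → ℕ
  | .east => 1
  | .north => 0
  | .diag => 1

/-- Vertical displacement of a step. -/
def DStep.dy : DStep → ℕ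
  | .east => 0
  | .north => 1
  | .diag => 1

/-- Position reached after the first `k` steps of `P`, starting at the point `s`. -/
def pathPos (s : ℕ × ℕ) (P : List DStep) (k : ℕ) : ℕ × ℕ :=
  (s.1 + ((P.take k).map DStep.dx).sum, s.2 + ((P.take k).map DStep.dy).sum)

/-- The Gale order: `U ≤ B` iff the increasing enumerations satisfy `u_ℓ ≤ b_ℓ`. -/
def galeLe {α : Type*} [LinearOrder α] (U B : Finset α) : Prop :=
  List.Forall₂ (· ≤ ·) (U.sort (· ≤ ·)) (B.sort (· ≤ ·))

/-- Bases of the Schubert matroid `SM(U)` of rank `r` on `[n] = {1, …, n}`: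
all `r`-subsets `B` of `[n]` with `U ≤ B` in the Gale order. -/
noncomputable def schubertBases (n r : ℕ) (U : Finset ℕ) : Finset (Finset ℕ) :=
  (Finset.Icc 1 n).powerset.filter fun B => B.card = r ∧ galeLe U B

/-- The point `p` lies weakly below the lattice path `path(U)`. -/
def belowPath (U : Finset ℕ) (p : ℕ × ℕ) : Prop :=
  p.2 ≤ (U ∩ Finset.Icc 1 (p.1 + p.2)).card

/-- `path(U)` traverses the vertical unit segment from `(x, y)` to `(x, y+1)`
(by its north step number `x + y + 1`). -/
def uVertSeg (U : Finset ℕ) (x y : ℕ) : Prop :=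
  x + y + 1 ∈ U ∧ (U ∩ Finset.Icc 1 (x + y + 1)).card = y + 1

/-- A Delannoy path associated to `SM(U)`: starts at `(1,1)`, ends at `(n-r, r)` and
stays weakly below `path(U)`. -/
def IsDelannoy (n r : ℕ) (U : Finset ℕ) (P : List DStep) : Prop :=
  pathPos (1, 1) P P.length = (n - r, r) ∧
    ∀ k ≤ P.length, belowPath U (pathPos (1, 1) P k)

/-- Admissible Delannoy path associated to `SM(U)`. -/
def IsAdmissible (n r : ℕ) (U : Finset ℕ) (P : List DStep) : Prop :=
  IsDelannoy n r U P ∧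
    ∀ (k : ℕ) (h : k < P.length),
      (P.get ⟨k, h⟩ = DStep.north →
        pathPos (1, 1) P (k + 1) = (n - r, r) ∨
          ¬ uVertSeg U (pathPos (1, 1) P k).1 (pathPos (1, 1) P k).2) ∧
      (P.get ⟨k, h⟩ = DStep.diag →
        belowPath U ((pathPos (1, 1) P k).1, (pathPos (1, 1) P k).2 + 1) ∧
          ¬ uVertSeg U (pathPos (1, 1) P k).1 (pathPos (1, 1) P k).2)

/-- Number of diagonal steps of a path. -/
def diagCount (P : List DStep) : ℕ := (P.filter (· = DStep.diag)).length

/-- The set of indices (0-based) of the diagonal steps of `P`. -/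
def diagIndices (P : List DStep) : Finset ℕ :=
  (Finset.range P.length).filter fun k => P.getD k DStep.east = DStep.diag

/-- Replace a diagonal step by a north step followed by an east step. -/
def expandNE : DStep → List DStep
  | DStep.diag => [DStep.north, DStep.east]
  | s => [s]

/-- Replace a diagonal step by an east step followed by a north step. -/
def expandEN : DStep → List DStep
  | DStep.diag => [DStep.east, DStep.north]
  | s => [s]

/-- The full lattice path of `B_P`: an east step, a north step, then the steps of `P`
with each diagonal step replaced by a north step immediately followed by an east step. -/
def fullPath (P : List DStep) : List DStep :=
  DStep.east :: DStep.north :: (P.map expandNE).flatten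

/-- The subset of `[n]` whose `path` is the given (diagonal-free) list of steps:
the set of (1-based) positions of the north steps. -/
def northSet (L : List DStep) : Finset ℕ :=
  ((Finset.range L.length).filter fun k => L.getD k DStep.east = DStep.north).image (· + 1)

/-- The basis `B_P` associated to a Delannoy path `P`. -/
def delannoyBasis (P : List DStep) : Finset ℕ := northSet (fullPath P)

/-! ### Matroid notions for a family of bases -/

/-- `S` is independent for the basis family `ℬ`: it is contained in some basis. -/
def famIndep (ℬ : Finset (Finset ℕ)) (S : Finset ℕ) : Prop := ∃ B ∈ ℬ, S ⊆ B

/-- `C` is a circuit for the basis family `ℬ`: a minimal dependent set. -/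
def famCircuit (ℬ : Finset (Finset ℕ)) (C : Finset ℕ) : Prop :=
  ¬ famIndep ℬ C ∧ ∀ C' ⊂ C, famIndep ℬ C'

/-- The dual basis family on the ground set `E`: complements of bases. -/
noncomputable def famDual (E : Finset ℕ) (ℬ : Finset (Finset ℕ)) : Finset (Finset ℕ) :=
  ℬ.image fun B => E \ B

/-- `e ∉ B` is externally active: `e` is the smallest element of the unique circuit
contained in `B ∪ {e}`. -/
def ExtActive (E : Finset ℕ) (ℬ : Finset (Finset ℕ)) (B : Finset ℕ) (e : ℕ) : Prop :=
  e ∈ E ∧ e ∉ B ∧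
    ∃ C, C ⊆ insert e B ∧ famCircuit ℬ C ∧ e ∈ C ∧ ∀ x ∈ C, e ≤ x

/-- `i ∈ B` is internally active: `i` is the smallest element of the unique cocircuit
contained in `(E ∖ B) ∪ {i}`. -/
def IntActive (E : Finset ℕ) (ℬ : Finset (Finset ℕ)) (B : Finset ℕ) (i : ℕ) : Prop :=
  i ∈ B ∧
    ∃ C, C ⊆ insert i (E \ B) ∧ famCircuit (famDual E ℬ) C ∧ i ∈ C ∧ ∀ x ∈ C, i ≤ x

/-- External activity `e(B)`. -/
noncomputable def extAct (E : Finset ℕ) (ℬ : Finset (Finset ℕ)) (B : Finset ℕ) : ℕ :=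
  (E.filter (ExtActive E ℬ B)).card

/-- Internal activity `i(B)`. -/
noncomputable def intAct (E : Finset ℕ) (ℬ : Finset (Finset ℕ)) (B : Finset ℕ) : ℕ :=
  (E.filter (IntActive E ℬ B)).card

/-- The statistic `α(B)`: the number of `i ∈ B` such that `B' = (B ∖ {i}) ∪ {i+1}`
is a basis with `e(B') = e(B)` and `i(B') = i(B)`. -/
noncomputable def alphaStat (E : Finset ℕ) (ℬ : Finset (Finset ℕ)) (B : Finset ℕ) : ℕ :=
  (B.filter fun i =>
    insert (i + 1) (B.erase i) ∈ ℬ ∧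
      extAct E ℬ (insert (i + 1) (B.erase i)) = extAct E ℬ B ∧
      intAct E ℬ (insert (i + 1) (B.erase i)) = intAct E ℬ B).card

/-- The rank function determined by a family of bases. -/
noncomputable def famRank (ℬ : Finset (Finset ℕ)) (A : Finset ℕ) : ℕ :=
  ℬ.sup fun B => (A ∩ B).card

/-- The β-invariant: `β(M) = (−1)^{rk(E)} Σ_{A ⊆ E} (−1)^{|A|} rk(A)`. -/
noncomputable def betaInv (E : Finset ℕ) (ℬ : Finset (Finset ℕ)) : ℤ :=
  (-1) ^ famRank ℬ E * ∑ A ∈ E.powerset, (-1) ^ A.card * (famRank ℬ A : ℤ)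

/-- `ℬ` is the collection of bases of a matroid with ground set `E`:
it is a nonempty family of subsets of `E` satisfying the basis exchange property. -/
def IsBasisFamily (E : Finset ℕ) (ℬ : Finset (Finset ℕ)) : Prop :=
  ℬ.Nonempty ∧ (∀ B ∈ ℬ, B ⊆ E) ∧
    ∀ B₁ ∈ ℬ, ∀ B₂ ∈ ℬ, ∀ x ∈ B₁ \ B₂, ∃ y ∈ B₂ \ B₁, insert y (B₁.erase x) ∈ ℬ

/-- Two elements lie in a common component: they are equal or in a common circuit. -/
def connRel (ℬ : Finset (Finset ℕ)) (e f : ℕ) : Prop :=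
  e = f ∨ ∃ C, famCircuit ℬ C ∧ e ∈ C ∧ f ∈ C

/-- The number of connected components of the matroid with bases `ℬ` on `E`. -/
noncomputable def numComponents (E : Finset ℕ) (ℬ : Finset (Finset ℕ)) : ℕ :=
  Set.ncard {S : Set ℕ | ∃ e ∈ E, S = {f | f ∈ E ∧ Relation.EqvGen (connRel ℬ) e f}}

/-- The matroid with bases `ℬ` on ground set `E` is connected. -/
def IsConnectedFam (E : Finset ℕ) (ℬ : Finset (Finset ℕ)) : Prop :=
  E.Nonempty ∧ ∀ e ∈ E, ∀ f ∈ E, Relation.EqvGen (connRel ℬ) e f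

/-- Series-parallel matroid: isomorphic to `U_{0,1}` or `U_{1,1}`
(a single loop or a single coloop), or connected with β-invariant `1`. -/
def IsSeriesParallel (E : Finset ℕ) (ℬ : Finset (Finset ℕ)) : Prop :=
  (E.card = 1 ∧ (ℬ = {∅} ∨ ℬ = {E})) ∨ (IsConnectedFam E ℬ ∧ betaInv E ℬ = 1)

/-- The bases of the restriction of the matroid with bases `ℬ` to the set `F`:
the maximal intersections of bases with `F`. -/
noncomputable def famRestrict (ℬ : Finset (Finset ℕ)) (F : Finset ℕ) : Finset (Finset ℕ) :=
  (ℬ.image (· ∩ F)).filter fun S => ∀ T ∈ ℬ.image (· ∩ F), S ⊆ T → S = T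

/-- The matroid with bases `ℬ` on `E` is a direct sum of series-parallel matroids. -/
def IsDirectSumOfSeriesParallel (E : Finset ℕ) (ℬ : Finset (Finset ℕ)) : Prop :=
  ∃ parts : Finset (Finset ℕ),
    (↑parts : Set (Finset ℕ)).PairwiseDisjoint id ∧
    parts.sup id = E ∧
    (∀ S ∈ parts, IsSeriesParallel S (famRestrict ℬ S)) ∧
    ℬ = E.powerset.filter fun B => ∀ S ∈ parts, B ∩ S ∈ famRestrict ℬ S

/-! ### Base polytopes -/

/-- The indicator vector of `B ⊆ E`, as a point of `ℝ^E`. -/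
noncomputable def basisVector (E : Finset ℕ) (B : Finset ℕ) : ↑E → ℝ :=
  fun e => if (e : ℕ) ∈ B then 1 else 0

/-- The base polytope of the matroid with bases `ℬ` on `E`:
the convex hull in `ℝ^E` of the indicator vectors of the bases. -/
noncomputable def basePolytope (E : Finset ℕ) (ℬ : Finset (Finset ℕ)) : Set (↑E → ℝ) :=
  convexHull ℝ (basisVector E '' (↑ℬ : Set (Finset ℕ)))

/-- The indicator function `ℝ^E → ℤ` of the base polytope. -/
noncomputable def polyInd (E : Finset ℕ) (ℬ : Finset (Finset ℕ)) : (↑E → ℝ) → ℤ :=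
  fun x => if x ∈ basePolytope E ℬ then 1 else 0

/-- The indicator function `ℝ^E → ℤ` of the relative interior of the base polytope. -/
noncomputable def relintInd (E : Finset ℕ) (ℬ : Finset (Finset ℕ)) : (↑E → ℝ) → ℤ :=
  fun x => if x ∈ intrinsicInterior ℝ (basePolytope E ℬ) then 1 else 0

/-! ### Cyclic flats and the cyclic chain lattice -/

/-- `F` is a flat of the matroid with bases `ℬ` on `E`. -/
def IsFlat (E : Finset ℕ) (ℬ : Finset (Finset ℕ)) (F : Finset ℕ) : Prop :=
  F ⊆ E ∧ ∀ e ∈ E, famRank ℬ (insert e F) = famRank ℬ F → e ∈ F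

/-- `F` is a cyclic flat: a flat whose restriction has no coloops. -/
def IsCyclicFlat (E : Finset ℕ) (ℬ : Finset (Finset ℕ)) (F : Finset ℕ) : Prop :=
  IsFlat E ℬ F ∧ ∀ e ∈ F, ¬ (∀ S ∈ famRestrict ℬ F, e ∈ S)

/-- The set of cyclic flats. -/
noncomputable def cyclicFlats (E : Finset ℕ) (ℬ : Finset (Finset ℕ)) : Finset (Finset ℕ) :=
  E.powerset.filter (IsCyclicFlat E ℬ)

/-- A chain of cyclic flats containing the minimum and maximum of the lattice of
cyclic flats; these are the elements (other than the top `1̂`) of the cyclic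
chain lattice. -/
def IsCyclicChain (E : Finset ℕ) (ℬ : Finset (Finset ℕ)) (C : Finset (Finset ℕ)) : Prop :=
  ↑C ⊆ (cyclicFlats E ℬ : Set (Finset ℕ)) ∧ IsChain (· ⊆ ·) (↑C : Set (Finset ℕ)) ∧
    (∃ F ∈ C, ∀ G ∈ cyclicFlats E ℬ, F ⊆ G) ∧
    (∃ F ∈ C, ∀ G ∈ cyclicFlats E ℬ, G ⊆ F)

/-- The set of chains of cyclic flats containing the minimum and the maximum. -/
noncomputable def cyclicChains (E : Finset ℕ) (ℬ : Finset (Finset ℕ)) :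
    Finset (Finset (Finset ℕ)) :=
  (cyclicFlats E ℬ).powerset.filter (IsCyclicChain E ℬ)

/-- The rank function `A ↦ min_{Z ∈ C} (rk_M(Z) + |A ∖ Z|)` associated to a chain `C`. -/
noncomputable def chainRank (ℬ : Finset (Finset ℕ)) (C : Finset (Finset ℕ))
    (A : Finset ℕ) : ℕ :=
  if h : C.Nonempty then C.inf' h fun Z => famRank ℬ Z + (A \ Z).card else A.card

/-- The bases of the matroid on `E` with rank function `rk`:
the subsets `B ⊆ E` with `rk B = |B| = rk E`. -/
noncomputable def basesOfRank (E : Finset ℕ) (rk : Finset ℕ → ℕ) : Finset (Finset ℕ) :=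
  E.powerset.filter fun B => rk B = B.card ∧ rk B = rk E

/-- The bases of the Schubert matroid `S_C` associated to a chain `C` of cyclic flats. -/
noncomputable def chainSchubert (E : Finset ℕ) (ℬ : Finset (Finset ℕ))
    (C : Finset (Finset ℕ)) : Finset (Finset ℕ) :=
  basesOfRank E (chainRank ℬ C)

/-- The point reached by `path(S)` after `k` steps. -/
def pathPoint (S : Finset ℕ) (k : ℕ) : ℕ × ℕ :=
  (k - (S ∩ Finset.Icc 1 k).card, (S ∩ Finset.Icc 1 k).card)


open Finset

/-! ### counting -/

def cnt (S : Finset ℕ) (k : ℕ) : ℕ := (S ∩ Finset.Icc 1 k).card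

lemma cnt_mono (S : Finset ℕ) {k l : ℕ} (h : k ≤ l) : cnt S k ≤ cnt S l :=
  card_le_card (inter_subset_inter le_rfl (Icc_subset_Icc le_rfl h))

lemma cnt_le_card (S : Finset ℕ) (k : ℕ) : cnt S k ≤ S.card :=
  card_le_card inter_subset_left

lemma cnt_eq_card {S : Finset ℕ} {n : ℕ} (h : S ⊆ Icc 1 n) {k : ℕ} (hk : n ≤ k) :
    cnt S k = S.card := by
  unfold cnt
  rw [inter_eq_left.mpr (h.trans (Icc_subset_Icc le_rfl hk))]

lemma one_mem_of_cnt {S : Finset ℕ} (h : 1 ≤ cnt S 1) : 1 ∈ S := by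
  obtain ⟨x, hx⟩ := card_pos.mp h
  obtain ⟨hx1, hx2⟩ := mem_inter.mp hx
  rw [mem_Icc] at hx2
  have : x = 1 := by omega
  rwa [this] at hx1

lemma mem_cnt_ge {S : Finset ℕ} {a k : ℕ} (ha : a ∈ S) (h1 : 1 ≤ a) (hk : a ≤ k) :
    1 ≤ cnt S k := card_pos.mpr ⟨a, mem_inter.mpr ⟨ha, mem_Icc.mpr ⟨h1, hk⟩⟩⟩

lemma cnt_split {S : Finset ℕ} {n : ℕ} (h : S ⊆ Icc 1 n) (k : ℕ) :
    S.card = cnt S k + (S ∩ Icc (k+1) n).card := by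
  unfold cnt
  rw [← card_union_of_disjoint]
  · congr 1
    ext x
    simp only [mem_union, mem_inter, mem_Icc]
    constructor
    · intro hx
      have h2 := mem_Icc.mp (h hx)
      refine (by omega : x ≤ k ∨ k + 1 ≤ x).imp (fun h3 => ⟨hx, ?_⟩) (fun h3 => ⟨hx, ?_⟩) <;> omega
    · rintro (⟨h1, _⟩ | ⟨h1, _⟩) <;> exact h1
  · rw [disjoint_left]
    intro x hx hx'
    rw [mem_inter, mem_Icc] at hx hx'
    omega

lemma cnt_insert {S : Finset ℕ} {a : ℕ} (ha : a ∉ S) (h1 : 1 ≤ a) (k : ℕ) :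
    cnt (insert a S) k = cnt S k + if a ≤ k then 1 else 0 := by
  unfold cnt
  split
  · rw [insert_inter_of_mem (mem_Icc.mpr ⟨h1, by assumption⟩),
      card_insert_of_notMem (fun h => ha (mem_inter.mp h).1)]
  · rw [insert_inter_of_notMem (fun h => by rw [mem_Icc] at h; omega), Nat.add_zero]

lemma cnt_erase {S : Finset ℕ} {a : ℕ} (ha : a ∈ S) (h1 : 1 ≤ a) (k : ℕ) :
    cnt S k = cnt (S.erase a) k + if a ≤ k then 1 else 0 := by
  conv_lhs => rw [← insert_erase ha]
  rw [cnt_insert (notMem_erase a S) h1]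

/-! ### Gale order vs counting -/

lemma sorted_forall2_iff : ∀ (L M : List ℕ), L.Pairwise (· ≤ ·) → M.Pairwise (· ≤ ·) →
    L.length = M.length →
    (List.Forall₂ (· ≤ ·) L M ↔
      ∀ k, (M.filter (fun x => x ≤ k)).length ≤ (L.filter (fun x => x ≤ k)).length) := by
  intro L
  induction L with
  | nil =>
    intro M _ _ hlen
    rw [List.length_nil] at hlen
    rw [List.length_eq_zero_iff.mp hlen.symm]
    simp
  | cons a L' ih =>
    intro M hL hM hlen
    cases M with
    | nil => simp at hlen
    | cons b M' =>
      obtain ⟨haL', hL'⟩ := List.pairwise_cons.mp hL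
      obtain ⟨hbM', hM'⟩ := List.pairwise_cons.mp hM
      have hlen' : L'.length = M'.length := by simpa using hlen
      constructor
      · intro h12 k
        obtain ⟨hab, h'⟩ := List.forall₂_cons.mp h12
        have := (ih M' hL' hM' hlen').mp h' k
        by_cases hb : b ≤ k
        · have hak : a ≤ k := le_trans hab hb
          simp [List.filter_cons, hb, hak]
          omega
        · by_cases hak : a ≤ k <;> simp [List.filter_cons, hb, hak] <;> omega
      · intro hcnt
        have hab : a ≤ b := by
          by_contra hab
          push_neg at hab
          have h1 := hcnt b
          have hLz : ((a :: L').filter (fun x => x ≤ b)).length = 0 := by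
            rw [List.length_eq_zero_iff, List.filter_eq_nil_iff]
            intro x hx
            simp only [decide_eq_true_eq]
            rcases List.mem_cons.mp hx with rfl | hx
            · omega
            · have := haL' x hx; omega
          have hMz : 0 < ((b :: M').filter (fun x => x ≤ b)).length := by
            simp [List.filter_cons]
          omega
        refine List.Forall₂.cons hab ((ih M' hL' hM' hlen').mpr ?_)
        intro k
        by_cases hak : a ≤ k
        · by_cases hb : b ≤ k
          · have := hcnt k
            simp [List.filter_cons, hb, hak] at this
            omega
          · have : (M'.filter (fun x => x ≤ k)).length = 0 := by
              rw [List.length_eq_zero_iff, List.filter_eq_nil_iff]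
              intro x hx
              simp only [decide_eq_true_eq]
              have := hbM' x hx; omega
            omega
        · have : (M'.filter (fun x => x ≤ k)).length = 0 := by
            rw [List.length_eq_zero_iff, List.filter_eq_nil_iff]
            intro x hx
            simp only [decide_eq_true_eq]
            have := hbM' x hx; omega
          omega

lemma length_sort_filter (S : Finset ℕ) (k : ℕ) :
    ((S.sort (· ≤ ·)).filter (fun x => x ≤ k)).length = (S.filter (fun x => x ≤ k)).card := by
  have hperm : (S.sort (· ≤ ·)).Perm S.toList := Finset.sort_perm_toList S _
  rw [List.Perm.length_eq (hperm.filter _)]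
  rw [← List.countP_eq_length_filter]
  have h2 : S.toList.countP (fun x => decide (x ≤ k)) = Multiset.countP (fun x => x ≤ k) S.val := by
    rw [← Multiset.coe_countP]
    congr 1
    exact Multiset.coe_toList S.val
  rw [h2, Multiset.countP_eq_card_filter]
  rfl

lemma cnt_eq_filter {S : Finset ℕ} {n : ℕ} (h : S ⊆ Icc 1 n) (k : ℕ) :
    cnt S k = (S.filter (fun x => x ≤ k)).card := by
  unfold cnt
  congr 1
  ext x
  simp only [mem_inter, mem_Icc, mem_filter]
  constructor
  · rintro ⟨h1, h2, h3⟩; exact ⟨h1, h3⟩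
  · rintro ⟨h1, h2⟩
    exact ⟨h1, (mem_Icc.mp (h h1)).1, h2⟩

lemma galeLe_iff_cnt {U B : Finset ℕ} {n m : ℕ} (hU : U ⊆ Icc 1 n) (hB : B ⊆ Icc 1 m)
    (hcard : B.card = U.card) :
    galeLe U B ↔ ∀ k, cnt B k ≤ cnt U k := by
  unfold galeLe
  rw [sorted_forall2_iff _ _ (Finset.pairwise_sort _ _) (Finset.pairwise_sort _ _)
    (by rw [Finset.length_sort, Finset.length_sort, hcard])]
  constructor
  · intro h k
    rw [cnt_eq_filter hU, cnt_eq_filter hB, ← length_sort_filter, ← length_sort_filter]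
    exact h k
  · intro h k
    rw [length_sort_filter, length_sort_filter, ← cnt_eq_filter hU, ← cnt_eq_filter hB]
    exact h k

lemma mem_SB_iff {U B : Finset ℕ} {n r : ℕ} (hU : U ⊆ Icc 1 n) (hr : U.card = r) :
    B ∈ schubertBases n r U ↔ (B ⊆ Icc 1 n ∧ B.card = r ∧ ∀ k, cnt B k ≤ cnt U k) := by
  unfold schubertBases
  rw [mem_filter, mem_powerset]
  constructor
  · rintro ⟨h1, h2, h3⟩
    exact ⟨h1, h2, (galeLe_iff_cnt hU h1 (by omega)).mp h3⟩
  · rintro ⟨h1, h2, h3⟩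
    exact ⟨h1, h2, (galeLe_iff_cnt hU h1 (by omega)).mpr h3⟩

open Finset

lemma le_famRank {ℬ : Finset (Finset ℕ)} {B A : Finset ℕ} (h : B ∈ ℬ) :
    (A ∩ B).card ≤ famRank ℬ A := by
  unfold famRank
  exact Finset.le_sup (f := fun B => (A ∩ B).card) h

lemma famRank_le {ℬ : Finset (Finset ℕ)} {A : Finset ℕ} {m : ℕ}
    (h : ∀ B ∈ ℬ, (A ∩ B).card ≤ m) : famRank ℬ A ≤ m := by unfold famRank; exact Finset.sup_le h

lemma self_mem_SB {U : Finset ℕ} {n r : ℕ} (hU : U ⊆ Icc 1 n) (hr : U.card = r) :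
    U ∈ schubertBases n r U := (mem_SB_iff hU hr).mpr ⟨hU, hr, fun _ => le_rfl⟩

lemma famRank_ground {U : Finset ℕ} {n r : ℕ} (hU : U ⊆ Icc 1 n) (hr : U.card = r) :
    famRank (schubertBases n r U) (Icc 1 n) = r := by
  apply le_antisymm
  · apply famRank_le
    intro B hB
    obtain ⟨h1, h2, _⟩ := (mem_SB_iff hU hr).mp hB
    rw [inter_eq_right.mpr h1]
    omega
  · have := le_famRank (A := Icc 1 n) (self_mem_SB hU hr)
    rwa [inter_eq_right.mpr hU, hr] at this

section Main
variable {U : Finset ℕ} {n r : ℕ} (hU : U ⊆ Icc 1 n) (hr : U.card = r) (hU1 : U.Nonempty)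

lemma erase_max_subset (hU : U ⊆ Icc 1 n) (hU1 : U.Nonempty) :
    U.erase (U.max' hU1) ⊆ Icc 1 (n-1) := by
  intro x hx
  have hx1 := mem_of_mem_erase hx
  have hxle : x ≤ U.max' hU1 := le_max' U x hx1
  have hne : x ≠ U.max' hU1 := ne_of_mem_erase hx
  have h1 := mem_Icc.mp (hU hx1)
  have h2 := mem_Icc.mp (hU (max'_mem U hU1))
  rw [mem_Icc]
  omega

lemma erase_max_subset' (hU : U ⊆ Icc 1 n) (hU1 : U.Nonempty) :
    U.erase (U.max' hU1) ⊆ Icc 1 (U.max' hU1) := by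
  intro x hx
  have hx1 := mem_of_mem_erase hx
  have hxle : x ≤ U.max' hU1 := le_max' U x hx1
  have h1 := mem_Icc.mp (hU hx1)
  rw [mem_Icc]
  omega

lemma cnt_max_full (hU : U ⊆ Icc 1 n) (hU1 : U.Nonempty) {k : ℕ} (hk : U.max' hU1 ≤ k) :
    cnt U k = U.card := by
  apply cnt_eq_card (n := U.max' hU1) _ hk
  intro x hx
  have h1 := mem_Icc.mp (hU hx)
  rw [mem_Icc]
  exact ⟨h1.1, le_max' U x hx⟩

/-- Contraction correspondence: bases containing `n` correspond to bases of
`SM(U \ max)` on `[n-1]`. -/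
lemma mem_SB_insert_iff (hU : U ⊆ Icc 1 n) (hr : U.card = r) (hU1 : U.Nonempty)
    {B' : Finset ℕ} (hB'n : n ∉ B') :
    B' ∈ schubertBases (n-1) (r-1) (U.erase (U.max' hU1)) ↔
      insert n B' ∈ schubertBases n r U := by
  have hr1 : 1 ≤ r := by
    have := card_pos.mpr hU1; omega
  have hn1 : 1 ≤ n := by
    have := mem_Icc.mp (hU (max'_mem U hU1)); omega
  have hU' : U.erase (U.max' hU1) ⊆ Icc 1 (n-1) := erase_max_subset hU hU1
  have hcard' : (U.erase (U.max' hU1)).card = r - 1 := by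
    rw [card_erase_of_mem (max'_mem U hU1)]; omega
  have hmax1 : 1 ≤ U.max' hU1 := by
    have := mem_Icc.mp (hU (max'_mem U hU1)); omega
  rw [mem_SB_iff hU' hcard', mem_SB_iff hU hr]
  constructor
  · rintro ⟨h1, h2, h3⟩
    refine ⟨?_, ?_, ?_⟩
    · intro x hx
      rcases mem_insert.mp hx with rfl | hx
      · rw [mem_Icc]; omega
      · have := mem_Icc.mp (h1 hx)
        rw [mem_Icc]; omega
    · rw [card_insert_of_notMem hB'n]; omega
    · intro k
      rw [cnt_insert hB'n hn1]
      have hck : cnt B' k ≤ cnt (U.erase (U.max' hU1)) k := h3 k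
      have hce := cnt_erase (max'_mem U hU1) hmax1 k
      by_cases hk : n ≤ k
      · have hBc := cnt_le_card B' k
        have hUc : cnt U k = r := by
          rw [cnt_max_full hU hU1 (le_trans (by have := mem_Icc.mp (hU (max'_mem U hU1)); omega) hk), hr]
        simp only [hk, if_true]
        omega
      · simp only [hk, if_false]
        split at hce <;> omega
  · rintro ⟨h1, h2, h3⟩
    refine ⟨?_, ?_, ?_⟩
    · intro x hx
      have hxn : x ∈ Icc 1 n := h1 (mem_insert_of_mem hx)
      rw [mem_Icc] at hxn ⊢
      have : x ≠ n := fun h => hB'n (h ▸ hx)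
      omega
    · rw [card_insert_of_notMem hB'n] at h2; omega
    · intro k
      have hce := cnt_erase (max'_mem U hU1) hmax1 k
      by_cases hk : U.max' hU1 ≤ k
      · have : cnt (U.erase (U.max' hU1)) k = r - 1 := by
          rw [cnt_eq_card (erase_max_subset' hU hU1) hk, hcard']
        rw [this]
        have := cnt_le_card B' k
        rw [card_insert_of_notMem hB'n] at h2
        omega
      · have h4 := h3 k
        rw [cnt_insert hB'n hn1] at h4
        have hkn : ¬ (n ≤ k) := by
          have := mem_Icc.mp (hU (max'_mem U hU1)); omega
        simp only [hkn, if_false] at h4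
        simp only [hk, if_false] at hce
        omega

/-- If `n ∈ U` then every basis contains `n`. -/
lemma top_mem_basis (hU : U ⊆ Icc 1 n) (hr : U.card = r) (hnU : n ∈ U)
    {B : Finset ℕ} (hB : B ∈ schubertBases n r U) : n ∈ B := by
  by_contra hnB
  obtain ⟨h1, h2, h3⟩ := (mem_SB_iff hU hr).mp hB
  have hn1 : 1 ≤ n := by have := mem_Icc.mp (hU hnU); omega
  have hB' : B ⊆ Icc 1 (n-1) := by
    intro x hx
    have := mem_Icc.mp (h1 hx)
    have : x ≠ n := fun h => hnB (h ▸ hx)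
    rw [mem_Icc]
    have := mem_Icc.mp (h1 hx)
    omega
  have hBr : cnt B (n-1) = r := by rw [cnt_eq_card hB' le_rfl, h2]
  have hUr : cnt U (n-1) ≤ r - 1 := by
    have hce := cnt_erase hnU hn1 (n-1)
    have : ¬ (n ≤ n - 1) := by omega
    simp only [this, if_false] at hce
    have h5 := cnt_le_card (U.erase n) (n-1)
    rw [card_erase_of_mem hnU, hr] at h5
    omega
  have := h3 (n-1)
  have hr1 : 1 ≤ r := by have := card_pos.mpr ⟨n, hnU⟩; omega
  omega

/-- Deletion: rank of subsets of `[n-1]` is computed by `SM(U)` on `[n-1]`. -/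
lemma famRank_del (hU : U ⊆ Icc 1 n) (hr : U.card = r) (hnU : n ∉ U)
    {A : Finset ℕ} (hA : A ⊆ Icc 1 (n-1)) :
    famRank (schubertBases n r U) A = famRank (schubertBases (n-1) r U) A := by
  have hU' : U ⊆ Icc 1 (n-1) := by
    intro x hx
    have := mem_Icc.mp (hU hx)
    have : x ≠ n := fun h => hnU (h ▸ hx)
    rw [mem_Icc]
    have := mem_Icc.mp (hU hx)
    omega
  apply le_antisymm
  · apply famRank_le
    intro B hB
    obtain ⟨h1, h2, h3⟩ := (mem_SB_iff hU hr).mp hB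
    by_cases hnB : n ∈ B
    · -- replace n by the largest missing element of [1, n-1]
      have hn1 : 1 ≤ n := by have := mem_Icc.mp (h1 hnB); omega
      have hrn : r ≤ n - 1 := by
        have := card_le_card hU'
        rw [hr, Nat.card_Icc] at this
        omega
      have hr1 : 1 ≤ r := by
        have := card_pos.mpr ⟨n, hnB⟩; omega
      have hD : (Icc 1 (n-1) \ B).Nonempty := by
        by_contra h
        rw [not_nonempty_iff_eq_empty, sdiff_eq_empty_iff_subset] at h
        have : Icc 1 n ⊆ B := by
          intro x hx
          rw [mem_Icc] at hx
          by_cases hxn : x = n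
          · exact hxn ▸ hnB
          · exact h (mem_Icc.mpr (by omega))
        have := card_le_card this
        rw [h2, Nat.card_Icc] at this
        omega
      set m := (Icc 1 (n-1) \ B).max' hD with hm
      have hmmem := (Icc 1 (n-1) \ B).max'_mem hD
      rw [mem_sdiff, mem_Icc] at hmmem
      obtain ⟨⟨hm1, hmn⟩, hmB⟩ := hmmem
      have hfull : ∀ j, m < j → j ≤ n - 1 → j ∈ B := by
        intro j hj1 hj2
        by_contra hjB
        have : j ∈ Icc 1 (n-1) \ B := by
          rw [mem_sdiff, mem_Icc]; exact ⟨⟨by omega, hj2⟩, hjB⟩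
        have := le_max' _ j this
        omega
      set C := insert m (B.erase n) with hC
      have hmBe : m ∉ B.erase n := fun h => hmB (mem_of_mem_erase h)
      have hCcard : C.card = r := by
        rw [hC, card_insert_of_notMem hmBe, card_erase_of_mem hnB, h2]; omega
      have hCsub : C ⊆ Icc 1 (n-1) := by
        intro x hx
        rcases mem_insert.mp hx with rfl | hx
        · rw [mem_Icc]; omega
        · have h5 := mem_Icc.mp (h1 (mem_of_mem_erase hx))
          have : x ≠ n := ne_of_mem_erase hx
          rw [mem_Icc]; omega
      have hCmem : C ∈ schubertBases (n-1) r U := by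
        rw [mem_SB_iff hU' hr]
        refine ⟨hCsub, hCcard, ?_⟩
        intro k
        have e1 : cnt C k = cnt (B.erase n) k + if m ≤ k then 1 else 0 :=
          cnt_insert hmBe hm1 k
        have e2 : cnt B k = cnt (B.erase n) k + if n ≤ k then 1 else 0 :=
          cnt_erase hnB hn1 k
        have hUk := h3 k
        by_cases hk1 : k < m
        · have : ¬ (m ≤ k) := by omega
          have hnk : ¬ (n ≤ k) := by omega
          simp only [this, hnk, if_false] at e1 e2
          omega
        · by_cases hk2 : k < n
          · -- key interval computation
            have hBk : B.card = cnt B k + (B ∩ Icc (k+1) n).card := cnt_split h1 k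
            have hBint : B ∩ Icc (k+1) n = Icc (k+1) n := by
              apply le_antisymm inter_subset_right
              intro j hj
              rw [mem_Icc] at hj
              rw [mem_inter]
              refine ⟨?_, mem_Icc.mpr hj⟩
              by_cases hjn : j = n
              · exact hjn ▸ hnB
              · exact hfull j (by omega) (by omega)
            have hUk2 : U.card = cnt U k + (U ∩ Icc (k+1) (n-1)).card := cnt_split hU' k
            have hUint : (U ∩ Icc (k+1) (n-1)).card ≤ (n-1) - k := by
              have h9 := card_le_card (inter_subset_right : U ∩ Icc (k+1) (n-1) ⊆ Icc (k+1) (n-1))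
              rw [Nat.card_Icc] at h9
              omega
            rw [hBint, Nat.card_Icc] at hBk
            have hmk : m ≤ k := by omega
            have hnk : ¬ (n ≤ k) := by omega
            simp only [hmk, hnk, if_true, if_false] at e1 e2
            omega
          · have hck : cnt C k = r := by rw [cnt_eq_card hCsub (by omega), hCcard]
            have hUck : cnt U k = r := by rw [cnt_eq_card hU (by omega), hr]
            omega
      have hsub : A ∩ B ⊆ A ∩ C := by
        intro x hx
        rw [mem_inter] at hx ⊢
        refine ⟨hx.1, ?_⟩
        have hxA := mem_Icc.mp (hA hx.1)
        have : x ≠ n := by omega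
        exact mem_insert_of_mem (mem_erase.mpr ⟨this, hx.2⟩)
      exact le_trans (card_le_card hsub) (le_famRank hCmem)
    · have : B ∈ schubertBases (n-1) r U := by
        rw [mem_SB_iff hU' hr]
        refine ⟨?_, h2, h3⟩
        intro x hx
        have := mem_Icc.mp (h1 hx)
        have : x ≠ n := fun h => hnB (h ▸ hx)
        have := mem_Icc.mp (h1 hx)
        rw [mem_Icc]; omega
      exact le_famRank this
  · apply famRank_le
    intro B hB
    have : B ∈ schubertBases n r U := by
      rw [mem_SB_iff hU hr]
      obtain ⟨h1, h2, h3⟩ := (mem_SB_iff hU' hr).mp hB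
      exact ⟨h1.trans (Icc_subset_Icc le_rfl (by omega)), h2, h3⟩
    exact le_famRank this

end Main
section Main2
open Finset
variable {U : Finset ℕ} {n r : ℕ}

/-- Nonempty contraction family. -/
lemma con_self_mem (hU : U ⊆ Icc 1 n) (hr : U.card = r) (hU1 : U.Nonempty) :
    U.erase (U.max' hU1) ∈ schubertBases (n-1) (r-1) (U.erase (U.max' hU1)) :=
  self_mem_SB (erase_max_subset hU hU1)
    (by rw [card_erase_of_mem (max'_mem U hU1)]; omega)

/-- Rank of `insert n A` equals contraction rank plus one. -/
lemma famRank_insert_top (hU : U ⊆ Icc 1 n) (hr : U.card = r) (hU1 : U.Nonempty)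
    {A : Finset ℕ} (hA : A ⊆ Icc 1 (n-1)) :
    famRank (schubertBases n r U) (insert n A)
      = famRank (schubertBases (n-1) (r-1) (U.erase (U.max' hU1))) A + 1 := by
  have hn1 : 1 ≤ n := by have := mem_Icc.mp (hU (max'_mem U hU1)); omega
  have hr1 : 1 ≤ r := by have := card_pos.mpr hU1; omega
  have hnA : n ∉ A := fun h => by have := mem_Icc.mp (hA h); omega
  apply le_antisymm
  · apply famRank_le
    intro B hB
    obtain ⟨h1, h2, h3⟩ := (mem_SB_iff hU hr).mp hB
    by_cases hnB : n ∈ B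
    · have hBe : B.erase n ∈ schubertBases (n-1) (r-1) (U.erase (U.max' hU1)) := by
        rw [mem_SB_insert_iff hU hr hU1 (notMem_erase n B), insert_erase hnB]
        exact hB
      have hint : insert n A ∩ B = insert n (A ∩ B.erase n) := by
        ext x
        simp only [mem_inter, mem_insert, mem_erase]
        constructor
        · rintro ⟨(rfl | hxA), hxB⟩
          · exact Or.inl rfl
          · exact Or.inr ⟨hxA, fun h => hnA (h ▸ hxA), hxB⟩
        · rintro (rfl | ⟨hxA, hxn, hxB⟩)
          · exact ⟨Or.inl rfl, hnB⟩
          · exact ⟨Or.inr hxA, hxB⟩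
      rw [hint, card_insert_of_notMem (fun h => hnA (mem_inter.mp h).1)]
      exact Nat.add_le_add_right (le_famRank hBe) 1
    · -- replace the largest element of B by n
      have hBne : B.Nonempty := card_pos.mp (by omega)
      set bm := B.max' hBne with hbm
      have hbmB := max'_mem B hBne
      have hbmn := mem_Icc.mp (h1 hbmB)
      have hnBe : n ∉ B.erase bm := fun h => hnB (mem_of_mem_erase h)
      set C := insert n (B.erase bm) with hC
      have hCmem : C ∈ schubertBases n r U := by
        rw [mem_SB_iff hU hr]
        refine ⟨?_, ?_, ?_⟩
        · intro x hx
          rcases mem_insert.mp hx with rfl | hx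
          · rw [mem_Icc]; omega
          · exact h1 (mem_of_mem_erase hx)
        · rw [card_insert_of_notMem hnBe, card_erase_of_mem hbmB, h2]; omega
        · intro k
          have e1 : cnt C k = cnt (B.erase bm) k + if n ≤ k then 1 else 0 :=
            cnt_insert hnBe (by omega) k
          have e2 : cnt B k = cnt (B.erase bm) k + if bm ≤ k then 1 else 0 :=
            cnt_erase hbmB (by omega) k
          have hUk := h3 k
          by_cases hk : n ≤ k
          · have hUck : cnt U k = r := by rw [cnt_eq_card hU (by omega), hr]
            have hsub9 : B.erase bm ⊆ Icc 1 k := by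
              intro x hx
              have := mem_Icc.mp (h1 (mem_of_mem_erase hx))
              rw [mem_Icc]; omega
            have h9 : cnt (B.erase bm) k = r - 1 := by
              rw [cnt_eq_card hsub9 le_rfl, card_erase_of_mem hbmB, h2]
            simp only [hk, if_true] at e1
            omega
          · simp only [hk, if_false] at e1
            split at e2 <;> omega
      have hCe : C.erase n = B.erase bm := by
        rw [hC, erase_insert hnBe]
      have hBe : B.erase bm ∈ schubertBases (n-1) (r-1) (U.erase (U.max' hU1)) := by
        rw [mem_SB_insert_iff hU hr hU1 hnBe]
        exact hCmem
      have hsub : insert n A ∩ B ⊆ insert bm (A ∩ B.erase bm) := by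
        intro x hx
        rw [mem_inter] at hx
        obtain ⟨hx1, hx2⟩ := hx
        rcases mem_insert.mp hx1 with rfl | hxA
        · exact absurd hx2 hnB
        · by_cases hxbm : x = bm
          · exact mem_insert.mpr (Or.inl hxbm)
          · exact mem_insert_of_mem (mem_inter.mpr ⟨hxA, mem_erase.mpr ⟨hxbm, hx2⟩⟩)
      calc (insert n A ∩ B).card ≤ (insert bm (A ∩ B.erase bm)).card := card_le_card hsub
        _ ≤ (A ∩ B.erase bm).card + 1 := card_insert_le _ _
        _ ≤ _ := Nat.add_le_add_right (le_famRank hBe) 1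
  · -- lower bound
    have hne : (schubertBases (n-1) (r-1) (U.erase (U.max' hU1))).Nonempty :=
      ⟨_, con_self_mem hU hr hU1⟩
    obtain ⟨B', hB', hBeq⟩ := Finset.exists_mem_eq_sup _ hne (fun B => (A ∩ B).card)
    have hnB' : n ∉ B' := by
      intro h
      have := (mem_SB_iff (erase_max_subset hU hU1)
        (by rw [card_erase_of_mem (max'_mem U hU1)]; omega)).mp hB'
      have := mem_Icc.mp (this.1 h)
      omega
    have hBmem : insert n B' ∈ schubertBases n r U :=
      (mem_SB_insert_iff hU hr hU1 hnB').mp hB'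
    have hint : insert n A ∩ insert n B' = insert n (A ∩ B') := by
      ext x
      simp only [mem_inter, mem_insert]
      constructor
      · rintro ⟨(rfl | hxA), (h | hxB)⟩
        · exact Or.inl rfl
        · exact Or.inl rfl
        · exact Or.inl h
        · exact Or.inr ⟨hxA, hxB⟩
      · rintro (rfl | ⟨hxA, hxB⟩)
        · exact ⟨Or.inl rfl, Or.inl rfl⟩
        · exact ⟨Or.inr hxA, Or.inr hxB⟩
    have : (insert n A ∩ insert n B').card = (A ∩ B').card + 1 := by
      rw [hint, card_insert_of_notMem (fun h => hnA (mem_inter.mp h).1)]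
    have h5 := le_famRank (A := insert n A) hBmem
    have h6 : famRank (schubertBases (n-1) (r-1) (U.erase (U.max' hU1))) A = (A ∩ B').card := hBeq
    omega

/-- Coloop case: rank of subsets of `[n-1]` equals contraction rank. -/
lemma famRank_coloop (hU : U ⊆ Icc 1 n) (hr : U.card = r) (hnU : n ∈ U)
    {A : Finset ℕ} (hA : A ⊆ Icc 1 (n-1)) :
    famRank (schubertBases n r U) A
      = famRank (schubertBases (n-1) (r-1) (U.erase (U.max' ⟨n, hnU⟩))) A := by
  have hU1 : U.Nonempty := ⟨n, hnU⟩
  have hn1 : 1 ≤ n := by have := mem_Icc.mp (hU hnU); omega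
  have hnA : n ∉ A := fun h => by have := mem_Icc.mp (hA h); omega
  apply le_antisymm
  · apply famRank_le
    intro B hB
    have hnB : n ∈ B := top_mem_basis hU hr hnU hB
    have hBe : B.erase n ∈ schubertBases (n-1) (r-1) (U.erase (U.max' hU1)) := by
      rw [mem_SB_insert_iff hU hr hU1 (notMem_erase n B), insert_erase hnB]
      exact hB
    have hsub : A ∩ B ⊆ A ∩ B.erase n := by
      intro x hx
      rw [mem_inter] at hx ⊢
      exact ⟨hx.1, mem_erase.mpr ⟨fun h => hnA (h ▸ hx.1), hx.2⟩⟩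
    exact le_trans (card_le_card hsub) (le_famRank hBe)
  · apply famRank_le
    intro B' hB'
    have hnB' : n ∉ B' := by
      intro h
      have := (mem_SB_iff (erase_max_subset hU hU1)
        (by rw [card_erase_of_mem (max'_mem U hU1)]; omega)).mp hB'
      have := mem_Icc.mp (this.1 h)
      omega
    have hBmem : insert n B' ∈ schubertBases n r U :=
      (mem_SB_insert_iff hU hr hU1 hnB').mp hB'
    have hsub : A ∩ B' ⊆ A ∩ insert n B' :=
      inter_subset_inter le_rfl (subset_insert n B')
    exact le_trans (card_le_card hsub) (le_famRank hBmem)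

/-- Alternating sum over a nonempty powerset vanishes. -/
lemma sum_powerset_neg_one (E : Finset ℕ) (hE : E.Nonempty) :
    ∑ A ∈ E.powerset, (-1 : ℤ) ^ A.card = 0 := by
  obtain ⟨a, ha⟩ := hE
  rw [← insert_erase ha, Finset.sum_powerset_insert (notMem_erase a E)]
  rw [← Finset.sum_add_distrib]
  apply Finset.sum_eq_zero
  intro t ht
  rw [mem_powerset] at ht
  have hat : a ∉ t := fun h => (notMem_erase a E) (ht h)
  rw [card_insert_of_notMem hat, pow_succ]
  ring

lemma Icc_one_eq_insert {n : ℕ} (hn : 1 ≤ n) :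
    Icc 1 n = insert n (Icc 1 (n-1)) := by
  ext x
  simp only [mem_Icc, mem_insert]
  omega

lemma not_top_mem_Icc {n : ℕ} : n ∉ Icc 1 (n-1) := by
  rw [mem_Icc]; omega

/-- Deletion–contraction for the β-invariant, `n` not a coloop. -/
lemma beta_del_con (hU : U ⊆ Icc 1 n) (hr : U.card = r) (h1U : 1 ∈ U) (hnU : n ∉ U)
    (hn : 2 ≤ n) :
    betaInv (Icc 1 n) (schubertBases n r U)
      = betaInv (Icc 1 (n-1)) (schubertBases (n-1) r U)
        + betaInv (Icc 1 (n-1)) (schubertBases (n-1) (r-1) (U.erase (U.max' ⟨1, h1U⟩))) := by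
  have hU1 : U.Nonempty := ⟨1, h1U⟩
  have hr1 : 1 ≤ r := by have := card_pos.mpr hU1; omega
  have hU' : U ⊆ Icc 1 (n-1) := by
    intro x hx
    have h5 := mem_Icc.mp (hU hx)
    have : x ≠ n := fun h => hnU (h ▸ hx)
    rw [mem_Icc]; omega
  have hUe : U.erase (U.max' hU1) ⊆ Icc 1 (n-1) := erase_max_subset hU hU1
  have hUecard : (U.erase (U.max' hU1)).card = r - 1 := by
    rw [card_erase_of_mem (max'_mem U hU1)]; omega
  unfold betaInv
  rw [famRank_ground hU hr, famRank_ground hU' hr, famRank_ground hUe hUecard]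
  rw [Icc_one_eq_insert (by omega), Finset.sum_powerset_insert not_top_mem_Icc]
  have key : ∀ A ∈ (Icc 1 (n-1)).powerset,
      (-1 : ℤ) ^ A.card * (famRank (schubertBases n r U) A : ℤ)
        + (-1) ^ (insert n A).card * (famRank (schubertBases n r U) (insert n A) : ℤ)
      = (-1 : ℤ) ^ A.card * (famRank (schubertBases (n-1) r U) A : ℤ)
        - (-1 : ℤ) ^ A.card * (famRank (schubertBases (n-1) (r-1) (U.erase (U.max' hU1))) A : ℤ)
        - (-1 : ℤ) ^ A.card := by
    intro A hA
    rw [mem_powerset] at hA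
    have hnA : n ∉ A := fun h => not_top_mem_Icc (hA h)
    rw [card_insert_of_notMem hnA, famRank_del hU hr hnU hA,
      famRank_insert_top hU hr hU1 hA, pow_succ]
    push_cast
    ring
  have hsplit : ∑ A ∈ (Icc 1 (n-1)).powerset,
        (-1 : ℤ) ^ A.card * (famRank (schubertBases n r U) A : ℤ)
      + ∑ A ∈ (Icc 1 (n-1)).powerset,
        (-1 : ℤ) ^ (insert n A).card * (famRank (schubertBases n r U) (insert n A) : ℤ)
      = ∑ A ∈ (Icc 1 (n-1)).powerset,
          (-1 : ℤ) ^ A.card * (famRank (schubertBases (n-1) r U) A : ℤ)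
        - ∑ A ∈ (Icc 1 (n-1)).powerset,
          (-1 : ℤ) ^ A.card * (famRank (schubertBases (n-1) (r-1) (U.erase (U.max' hU1))) A : ℤ)
        - ∑ A ∈ (Icc 1 (n-1)).powerset, (-1 : ℤ) ^ A.card := by
    rw [← Finset.sum_add_distrib, ← Finset.sum_sub_distrib, ← Finset.sum_sub_distrib]
    exact Finset.sum_congr rfl key
  rw [hsplit, sum_powerset_neg_one _ (by
    refine ⟨1, ?_⟩
    rw [mem_Icc]
    omega)]
  have hpow : (-1 : ℤ) ^ r = -(-1 : ℤ) ^ (r - 1) :=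
    calc (-1:ℤ)^r = (-1)^(r-1) * (-1) := by rw [← pow_succ]; congr 1; omega
    _ = -(-1)^(r-1) := by ring
  rw [hpow]
  ring

/-- If `n ∈ U` (so `n` is a coloop), the β-invariant vanishes. -/
lemma beta_coloop (hU : U ⊆ Icc 1 n) (hr : U.card = r) (hnU : n ∈ U) (hn : 2 ≤ n) :
    betaInv (Icc 1 n) (schubertBases n r U) = 0 := by
  have hU1 : U.Nonempty := ⟨n, hnU⟩
  unfold betaInv
  rw [Icc_one_eq_insert (by omega), Finset.sum_powerset_insert not_top_mem_Icc]
  have key : ∀ A ∈ (Icc 1 (n-1)).powerset,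
      (-1 : ℤ) ^ A.card * (famRank (schubertBases n r U) A : ℤ)
        + (-1) ^ (insert n A).card * (famRank (schubertBases n r U) (insert n A) : ℤ)
      = -(-1 : ℤ) ^ A.card := by
    intro A hA
    rw [mem_powerset] at hA
    have hnA : n ∉ A := fun h => not_top_mem_Icc (hA h)
    rw [card_insert_of_notMem hnA, famRank_coloop hU hr hnU hA,
      famRank_insert_top hU hr hU1 hA, pow_succ]
    push_cast
    ring
  have hsplit : ∑ A ∈ (Icc 1 (n-1)).powerset,
        (-1 : ℤ) ^ A.card * (famRank (schubertBases n r U) A : ℤ)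
      + ∑ A ∈ (Icc 1 (n-1)).powerset,
        (-1 : ℤ) ^ (insert n A).card * (famRank (schubertBases n r U) (insert n A) : ℤ)
      = ∑ A ∈ (Icc 1 (n-1)).powerset, -(-1 : ℤ) ^ A.card := by
    rw [← Finset.sum_add_distrib]
    exact Finset.sum_congr rfl key
  rw [hsplit, Finset.sum_neg_distrib, sum_powerset_neg_one _ (by
    refine ⟨1, ?_⟩
    rw [mem_Icc]
    omega)]
  ring

/-- Rank-zero matroid has vanishing β-invariant. -/
lemma beta_rank_zero {m : ℕ} : betaInv (Icc 1 m) (schubertBases m 0 ∅) = 0 := by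
  have hz : ∀ A : Finset ℕ, famRank (schubertBases m 0 ∅) A = 0 := by
    intro A
    apply Nat.le_zero.mp
    apply famRank_le
    intro B hB
    have : B.card = 0 := ((mem_SB_iff (empty_subset _) rfl).mp hB).2.1
    rw [card_eq_zero.mp this]
    simp
  unfold betaInv
  rw [Finset.sum_eq_zero (fun A _ => by rw [hz A]; simp)]
  ring

end Main2


section Paths
open Finset

instance : Finite DStep :=
  Finite.of_injective (fun s => (match s with | .east => 0 | .north => 1 | .diag => 2 : Fin 3))
    (by intro a b h; cases a <;> cases b <;> simp_all)

lemma belowPath_iff {U : Finset ℕ} {p : ℕ × ℕ} :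
    belowPath U p ↔ p.2 ≤ cnt U (p.1 + p.2) := Iff.rfl

lemma uVertSeg_iff {U : Finset ℕ} {x y : ℕ} :
    uVertSeg U x y ↔ (x + y + 1 ∈ U ∧ cnt U (x + y + 1) = y + 1) := Iff.rfl

/-- coordinates -/
def px (P : List DStep) (k : ℕ) : ℕ := (pathPos (1,1) P k).1
def py (P : List DStep) (k : ℕ) : ℕ := (pathPos (1,1) P k).2

lemma pathPos_eq (P : List DStep) (k : ℕ) : pathPos (1,1) P k = (px P k, py P k) := rfl

lemma px_zero (P : List DStep) : px P 0 = 1 := by simp [px, pathPos]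
lemma py_zero (P : List DStep) : py P 0 = 1 := by simp [py, pathPos]

lemma px_one_le (P : List DStep) (k : ℕ) : 1 ≤ px P k := Nat.le_add_right 1 _
lemma py_one_le (P : List DStep) (k : ℕ) : 1 ≤ py P k := Nat.le_add_right 1 _

lemma take_map_sum_mono (f : DStep → ℕ) (P : List DStep) {k l : ℕ} (h : k ≤ l) :
    ((P.take k).map f).sum ≤ ((P.take l).map f).sum := by
  rw [show l = k + (l - k) by omega, List.take_add, List.map_append, List.sum_append]
  omega

lemma px_mono (P : List DStep) {k l : ℕ} (h : k ≤ l) : px P k ≤ px P l :=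
  Nat.add_le_add_left (take_map_sum_mono _ P h) 1

lemma py_mono (P : List DStep) {k l : ℕ} (h : k ≤ l) : py P k ≤ py P l :=
  Nat.add_le_add_left (take_map_sum_mono _ P h) 1

lemma px_succ (P : List DStep) {k : ℕ} (h : k < P.length) :
    px P (k+1) = px P k + (P.get ⟨k, h⟩).dx := by
  unfold px pathPos
  rw [List.take_succ, List.getElem?_eq_getElem h]
  simp only [Option.toList_some, List.map_append, List.sum_append, List.map_cons,
    List.map_nil, List.sum_cons, List.sum_nil, List.get_eq_getElem]
  omega

lemma py_succ (P : List DStep) {k : ℕ} (h : k < P.length) :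
    py P (k+1) = py P k + (P.get ⟨k, h⟩).dy := by
  unfold py pathPos
  rw [List.take_succ, List.getElem?_eq_getElem h]
  simp only [Option.toList_some, List.map_append, List.sum_append, List.map_cons,
    List.map_nil, List.sum_cons, List.sum_nil, List.get_eq_getElem]
  omega

lemma px_of_le (P : List DStep) {k : ℕ} (h : P.length ≤ k) : px P k = px P P.length := by
  unfold px pathPos
  rw [List.take_of_length_le h, List.take_of_length_le le_rfl]

lemma py_of_le (P : List DStep) {k : ℕ} (h : P.length ≤ k) : py P k = py P P.length := by
  unfold py pathPos
  rw [List.take_of_length_le h, List.take_of_length_le le_rfl]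

lemma length_le_sum_dxdy : ∀ L : List DStep,
    L.length ≤ (L.map (fun s => s.dx + s.dy)).sum := by
  intro L
  induction L with
  | nil => simp
  | cons s L ih =>
    have : 1 ≤ s.dx + s.dy := by cases s <;> simp [DStep.dx, DStep.dy]
    simp only [List.length_cons, List.map_cons, List.sum_cons]
    omega

lemma sum_map_add (f g : DStep → ℕ) : ∀ L : List DStep,
    (L.map (fun s => f s + g s)).sum = (L.map f).sum + (L.map g).sum := by
  intro L
  induction L with
  | nil => simp
  | cons s L ih => simp only [List.map_cons, List.sum_cons, ih]; omega

lemma growth (P : List DStep) {k l : ℕ} (hk : k ≤ l) (hl : l ≤ P.length) :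
    px P k + py P k + (l - k) ≤ px P l + py P l := by
  unfold px py pathPos
  simp only
  rw [show l = k + (l - k) by omega, List.take_add, List.map_append, List.sum_append,
    List.map_append, List.sum_append]
  have h1 : l - k ≤ (((P.drop k).take (l - k)).map (fun s => s.dx + s.dy)).sum := by
    refine le_trans ?_ (length_le_sum_dxdy _)
    rw [List.length_take, List.length_drop]
    omega
  rw [sum_map_add] at h1
  omega

lemma reach_end (P : List DStep) {k : ℕ} (hk : k ≤ P.length)
    (h : pathPos (1,1) P k = pathPos (1,1) P P.length) : k = P.length := by
  have h1 : px P k = px P P.length := congrArg Prod.fst h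
  have h2 : py P k = py P P.length := congrArg Prod.snd h
  have := growth P hk le_rfl
  omega

/-- Discrete intermediate value theorem. -/
lemma ivt (f : ℕ → ℕ) (c : ℕ) : ∀ (L : ℕ), (∀ k < L, f (k+1) ≤ f k + 1) → f 0 ≤ c → c < f L →
    ∃ k < L, f k = c ∧ f (k+1) = c + 1 := by
  intro L
  induction L with
  | zero => intro _ h0 hL; omega
  | succ L ih =>
    intro hstep h0 hL
    by_cases hfL : f L ≤ c
    · refine ⟨L, by omega, ?_, ?_⟩
      · have := hstep L (by omega)
        omega
      · have := hstep L (by omega)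
        omega
    · obtain ⟨k, hk, h1, h2⟩ := ih (fun k hk => hstep k (by omega)) h0 (by omega)
      exact ⟨k, by omega, h1, h2⟩

lemma dy_le_one (s : DStep) : s.dy ≤ 1 := by cases s <;> simp [DStep.dy]

lemma get_ne_diag {P : List DStep} (hd : diagCount P = 0) {k : ℕ} (h : k < P.length) :
    P.get ⟨k, h⟩ ≠ DStep.diag := by
  intro hdiag
  unfold diagCount at hd
  rw [List.length_eq_zero_iff, List.filter_eq_nil_iff] at hd
  rw [List.get_eq_getElem] at hdiag
  exact hd _ (List.get_mem P ⟨k, h⟩) (by simp [hdiag])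

lemma step_cases {P : List DStep} (hd : diagCount P = 0) {k : ℕ} (h : k < P.length) :
    P.get ⟨k, h⟩ = DStep.east ∨ P.get ⟨k, h⟩ = DStep.north := by
  have := get_ne_diag hd h
  cases hget : P.get ⟨k, h⟩ <;> simp_all

lemma diagCount_append (Q : List DStep) (t : DStep) (ht : t ≠ DStep.diag) :
    diagCount (Q ++ [t]) = diagCount Q := by
  unfold diagCount
  rw [List.filter_append, List.length_append]
  have : List.filter (· = DStep.diag) [t] = [] := by
    rw [List.filter_eq_nil_iff]
    intro a ha
    simp only [List.mem_singleton] at ha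
    subst ha
    simp [ht]
  rw [this]
  simp

lemma pathPos_append_le {s : ℕ × ℕ} {Q : List DStep} {t : DStep} {k : ℕ} (h : k ≤ Q.length) :
    pathPos s (Q ++ [t]) k = pathPos s Q k := by
  unfold pathPos
  rw [List.take_append_of_le_length h]

lemma px_append_le {Q : List DStep} {t : DStep} {k : ℕ} (h : k ≤ Q.length) :
    px (Q ++ [t]) k = px Q k := by unfold px; rw [pathPos_append_le h]

lemma py_append_le {Q : List DStep} {t : DStep} {k : ℕ} (h : k ≤ Q.length) :
    py (Q ++ [t]) k = py Q k := by unfold py; rw [pathPos_append_le h]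

lemma length_concat' (Q : List DStep) (t : DStep) : (Q ++ [t]).length = Q.length + 1 := by
  simp

lemma get_concat_last (Q : List DStep) (t : DStep) :
    (Q ++ [t]).get ⟨Q.length, by simp⟩ = t := by
  simp only [List.get_eq_getElem]
  exact List.getElem_concat_length rfl _

lemma get_concat_lt (Q : List DStep) (t : DStep) {k : ℕ} (h : k < Q.length) :
    (Q ++ [t]).get ⟨k, by simp; omega⟩ = Q.get ⟨k, h⟩ := by
  simp only [List.get_eq_getElem]
  exact List.getElem_append_left h

lemma px_concat (Q : List DStep) (t : DStep) :
    px (Q ++ [t]) (Q.length + 1) = px Q Q.length + t.dx := by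
  rw [px_succ (Q ++ [t]) (by simp), get_concat_last, px_append_le le_rfl]

lemma py_concat (Q : List DStep) (t : DStep) :
    py (Q ++ [t]) (Q.length + 1) = py Q Q.length + t.dy := by
  rw [py_succ (Q ++ [t]) (by simp), get_concat_last, py_append_le le_rfl]

end Paths

section Transfer
open Finset

lemma cnt_subset_le {S T : Finset ℕ} (h : S ⊆ T) (k : ℕ) : cnt S k ≤ cnt T k :=
  Finset.card_le_card (inter_subset_inter h le_rfl)

lemma subset_pred {U : Finset ℕ} {n : ℕ} (hU : U ⊆ Icc 1 n) (hnU : n ∉ U) :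
    U ⊆ Icc 1 (n-1) := by
  intro x hx
  have h1 := mem_Icc.mp (hU hx)
  have h2 : x ≠ n := fun he => hnU (he ▸ hx)
  rw [mem_Icc]
  omega

-- refined get lemmas with arbitrary proofs
lemma get_concat_last' (Q : List DStep) (t : DStep) {h : Q.length < (Q ++ [t]).length} :
    (Q ++ [t]).get ⟨Q.length, h⟩ = t := get_concat_last Q t

lemma get_concat_lt' (Q : List DStep) (t : DStep) {k : ℕ} (hk : k < Q.length)
    {h : k < (Q ++ [t]).length} : (Q ++ [t]).get ⟨k, h⟩ = Q.get ⟨k, hk⟩ :=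
  get_concat_lt Q t hk

/-- East appending: transfer of admissibility, case `n-1 ∉ U`. -/
lemma append_east_iff {U : Finset ℕ} {n r : ℕ} (hU : U ⊆ Icc 1 n) (hr : U.card = r)
    (hnU : n ∉ U) (hn1U : n - 1 ∉ U) (hn : 3 ≤ n) (Q : List DStep) :
    (IsAdmissible n r U (Q ++ [DStep.east]) ∧ diagCount (Q ++ [DStep.east]) = 0) ↔
      (IsAdmissible (n-1) r U Q ∧ diagCount Q = 0) := by
  set P := Q ++ [DStep.east] with hP
  have hlen : P.length = Q.length + 1 := by simp [hP]
  have hte : DStep.east ≠ DStep.diag := fun h => DStep.noConfusion h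
  constructor
  · rintro ⟨⟨⟨hend, hbelow⟩, hstep⟩, hdP⟩
    rw [hlen] at hend
    have hdQ : diagCount Q = 0 := by rwa [diagCount_append Q _ hte] at hdP
    have hx : px P (Q.length+1) = n - r := congrArg Prod.fst hend
    have hy : py P (Q.length+1) = r := congrArg Prod.snd hend
    rw [px_concat] at hx
    rw [py_concat] at hy
    simp only [DStep.dx, DStep.dy] at hx hy
    have hx1 : 1 ≤ px Q Q.length := px_one_le Q Q.length
    have hy1 : 1 ≤ py Q Q.length := py_one_le Q Q.length
    have hQend : pathPos (1,1) Q Q.length = ((n-1) - r, r) := by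
      rw [pathPos_eq]
      rw [Prod.mk.injEq]
      omega
    refine ⟨⟨⟨hQend, ?_⟩, ?_⟩, hdQ⟩
    · intro k hk
      have : pathPos (1,1) Q k = pathPos (1,1) P k := (pathPos_append_le hk).symm
      rw [this]
      exact hbelow k (by omega)
    · intro k hk
      have hk' : k < P.length := by omega
      constructor
      · intro hQn
        have hPn : P.get ⟨k, hk'⟩ = DStep.north := by
          rw [get_concat_lt' Q _ hk]; exact hQn
        rcases (hstep k hk').1 hPn with hreach | hnv
        · exfalso
          have : k + 1 = P.length := by
            apply reach_end P (by omega)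
            rw [hreach, hlen]
            exact hend.symm
          omega
        · right
          have : pathPos (1,1) Q k = pathPos (1,1) P k := (pathPos_append_le (by omega)).symm
          rw [this]
          exact hnv
      · intro hdiag
        exact absurd hdiag (get_ne_diag hdQ hk)
  · rintro ⟨⟨⟨hend, hbelow⟩, hstep⟩, hdQ⟩
    have hx : px Q Q.length = (n-1) - r := congrArg Prod.fst hend
    have hy : py Q Q.length = r := congrArg Prod.snd hend
    have hx1 : 1 ≤ px Q Q.length := px_one_le Q Q.length
    have hy1 : 1 ≤ py Q Q.length := py_one_le Q Q.length
    have hrn : r + 1 ≤ n - 1 := by omega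
    refine ⟨⟨⟨?_, ?_⟩, ?_⟩, by rwa [diagCount_append Q _ hte]⟩
    · rw [hlen, pathPos_eq, px_concat, py_concat]
      simp only [DStep.dx, DStep.dy]
      rw [Prod.mk.injEq]
      omega
    · intro k hk
      rw [hlen] at hk
      by_cases hkL : k ≤ Q.length
      · rw [pathPos_append_le hkL]
        exact hbelow k hkL
      · have hkL1 : k = Q.length + 1 := by omega
        subst hkL1
        rw [belowPath_iff, pathPos_eq, px_concat, py_concat]
        simp only [DStep.dx, DStep.dy]
        have harg : px Q Q.length + 1 + (py Q Q.length + 0) = n := by omega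
        rw [harg, cnt_eq_card hU le_rfl, hr]
        omega
    · intro k hk
      rw [hlen] at hk
      by_cases hkL : k < Q.length
      · have hget : P.get ⟨k, by omega⟩ = Q.get ⟨k, hkL⟩ := get_concat_lt' Q _ hkL
        constructor
        · intro hPn
          rw [hget] at hPn
          rcases (hstep k hkL).1 hPn with hreach | hnv
          · -- the north step is the last step of Q
            have hk1 : k + 1 = Q.length := by
              apply reach_end Q (by omega)
              rw [hreach]
              exact hend.symm
            right
            have hcoord : pathPos (1,1) P k = pathPos (1,1) Q k := pathPos_append_le (by omega)
            rw [hcoord]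
            intro hseg
            obtain ⟨hmem, _⟩ := hseg
            have e1 : py Q (k+1) = py Q k + 1 := by
              rw [py_succ Q hkL, hPn]
              simp [DStep.dy]
            have e2 : px Q (k+1) = px Q k := by
              rw [px_succ Q hkL, hPn]
              simp [DStep.dx]
            have e3 : py Q (k+1) = r := by rw [hk1]; exact hy
            have e4 : px Q (k+1) = (n-1) - r := by rw [hk1]; exact hx
            have harg : (pathPos (1,1) Q k).1 + (pathPos (1,1) Q k).2 + 1 = n - 1 := by
              have f1 : (pathPos (1,1) Q k).1 = px Q k := rfl
              have f2 : (pathPos (1,1) Q k).2 = py Q k := rfl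
              omega
            rw [harg] at hmem
            exact hn1U hmem
          · right
            have hcoord : pathPos (1,1) P k = pathPos (1,1) Q k := pathPos_append_le (by omega)
            rw [hcoord]
            exact hnv
        · intro hdiag
          rw [hget] at hdiag
          exact absurd hdiag (get_ne_diag hdQ hkL)
      · have hkL1 : k = Q.length := by omega
        subst hkL1
        have hget : P.get ⟨Q.length, by omega⟩ = DStep.east := get_concat_last' Q _
        constructor
        · intro hPn
          rw [hget] at hPn
          exact absurd hPn (fun h => DStep.noConfusion h)
        · intro hPd
          rw [hget] at hPd
          exact absurd hPd (fun h => DStep.noConfusion h)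

/-- East appending is impossible when `n-1 ∈ U`. -/
lemma append_east_not {U : Finset ℕ} {n r : ℕ} (hU : U ⊆ Icc 1 n) (hr : U.card = r)
    (h1U : 1 ∈ U) (hnU : n ∉ U) (hn1U : n - 1 ∈ U) (hn : 3 ≤ n) (Q : List DStep) :
    ¬ (IsAdmissible n r U (Q ++ [DStep.east]) ∧ diagCount (Q ++ [DStep.east]) = 0) := by
  rintro ⟨⟨⟨hend, hbelow⟩, hstep⟩, hdP⟩
  set P := Q ++ [DStep.east] with hP
  have hlen : P.length = Q.length + 1 := by simp [hP]
  rw [hlen] at hend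
  have hx : px P (Q.length+1) = n - r := congrArg Prod.fst hend
  have hy : py P (Q.length+1) = r := congrArg Prod.snd hend
  have hxc : px P (Q.length+1) = px Q Q.length + 1 := by
    rw [px_concat]; simp [DStep.dx]
  have hyc : py P (Q.length+1) = py Q Q.length := by
    rw [py_concat]; simp [DStep.dy]
  have hx1 : 1 ≤ px Q Q.length := px_one_le Q Q.length
  -- r ≥ 2 since 1 and n-1 are distinct elements of U
  have hr2 : 2 ≤ r := by
    have hsub : ({1, n-1} : Finset ℕ) ⊆ U := by
      intro x hx
      rcases mem_insert.mp hx with rfl | hx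
      · exact h1U
      · rw [mem_singleton] at hx
        exact hx ▸ hn1U
    have hcard : ({1, n-1} : Finset ℕ).card = 2 := Finset.card_pair (by omega)
    have := Finset.card_le_card hsub
    omega
  -- find the last north step via IVT
  have hivt := ivt (py P) (r - 1) (Q.length + 1)
    (fun k hk => by
      rw [py_succ P (by omega)]
      have := dy_le_one (P.get ⟨k, by omega⟩)
      omega)
    (by rw [py_zero]; omega)
    (by omega)
  obtain ⟨k, hkL1, hpyk, hpyk1⟩ := hivt
  have hh : k < P.length := by omega
  have hdy : (P.get ⟨k, hh⟩).dy = 1 := by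
    have := py_succ P hh
    omega
  have hget : P.get ⟨k, hh⟩ = DStep.north := by
    rcases step_cases hdP hh with he | hn'
    · rw [he] at hdy; simp [DStep.dy] at hdy
    · exact hn'
  have hkL : k < Q.length := by
    by_contra hc
    have : k = Q.length := by omega
    subst this
    have : P.get ⟨Q.length, hh⟩ = DStep.east := get_concat_last' Q _
    rw [this] at hget
    exact DStep.noConfusion hget
  -- coordinates
  set x := px P k with hxdef
  have hxb : x ≤ n - r - 1 := by
    have h1 : px P k ≤ px P Q.length := px_mono P (by omega)
    have h2 : px P Q.length = px Q Q.length := px_append_le le_rfl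
    omega
  have hdx : (P.get ⟨k, hh⟩).dx = 0 := by rw [hget]; simp [DStep.dx]
  have hpx1 : px P (k+1) = x := by rw [px_succ P hh, hdx]; omega
  -- below path at k+1
  have hbel := hbelow (k+1) (by omega)
  rw [belowPath_iff] at hbel
  have f1 : (pathPos (1,1) P (k+1)).1 = px P (k+1) := rfl
  have f2 : (pathPos (1,1) P (k+1)).2 = py P (k+1) := rfl
  have hbel2 : r ≤ cnt U (x + r) := by
    have harg : (pathPos (1,1) P (k+1)).1 + (pathPos (1,1) P (k+1)).2 = x + r := by omega
    rw [harg] at hbel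
    omega
  have hxr : x + r ≤ n - 1 := by omega
  have hcup : cnt U (x + r) ≤ r := by
    have h1 : cnt U (x+r) ≤ cnt U (n-1) := cnt_mono U hxr
    have h2 : cnt U (n-1) = r := by
      rw [cnt_eq_card (subset_pred hU hnU) le_rfl, hr]
    omega
  have heq : cnt U (x + r) = r := by omega
  by_cases hcase : x + r = n - 1
  · -- the segment is a U-segment: contradiction with the step condition
    rcases (hstep k hh).1 hget with hreach | hnv
    · have : k + 1 = P.length := by
        apply reach_end P (by omega)
        rw [hreach, hlen]
        exact hend.symm
      omega
    · apply hnv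
      have f3 : (pathPos (1,1) P k).1 = x := rfl
      have f4 : (pathPos (1,1) P k).2 = py P k := rfl
      constructor
      · have harg : (pathPos (1,1) P k).1 + (pathPos (1,1) P k).2 + 1 = n - 1 := by omega
        rw [harg]
        exact hn1U
      · have harg : (pathPos (1,1) P k).1 + (pathPos (1,1) P k).2 + 1 = x + r := by omega
        rw [harg]
        show cnt U (x + r) = _
        omega
  · -- x + r < n - 1 : but then U has an element above x+r, contradicting heq
    have hssub : U ∩ Icc 1 (x+r) ⊂ U := by
      rw [Finset.ssubset_iff_of_subset inter_subset_left]
      refine ⟨n-1, hn1U, ?_⟩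
      intro hmem
      have := mem_Icc.mp (mem_inter.mp hmem).2
      omega
    have := Finset.card_lt_card hssub
    rw [hr] at this
    have : cnt U (x+r) < r := this
    omega

end Transfer

section TransferN
open Finset

/-- North appending: transfer of admissibility to the contraction. -/
lemma append_north_iff {U : Finset ℕ} {n r : ℕ} (hU : U ⊆ Icc 1 n) (hr : U.card = r)
    (h1U : 1 ∈ U) (hnU : n ∉ U) (hn : 3 ≤ n) (Q : List DStep) :
    (IsAdmissible n r U (Q ++ [DStep.north]) ∧ diagCount (Q ++ [DStep.north]) = 0) ↔
      (IsAdmissible (n-1) (r-1) (U.erase (U.max' ⟨1, h1U⟩)) Q ∧ diagCount Q = 0) := by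
  set P := Q ++ [DStep.north] with hP
  set u := U.max' ⟨1, h1U⟩ with hu
  set V := U.erase u with hV
  have hlen : P.length = Q.length + 1 := by simp [hP]
  have htn : DStep.north ≠ DStep.diag := fun h => DStep.noConfusion h
  have huU : u ∈ U := U.max'_mem ⟨1, h1U⟩
  have hu1 : 1 ≤ u := by have := mem_Icc.mp (hU huU); omega
  have hun : u ≤ n - 1 := by
    have := mem_Icc.mp (hU huU)
    have : u ≠ n := fun he => hnU (he ▸ huU)
    have := mem_Icc.mp (hU huU)
    omega
  have hUfull : ∀ k, u ≤ k → cnt U k = r := fun k hk => by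
    rw [cnt_max_full hU ⟨1, h1U⟩ hk, hr]
  have hVcnt : ∀ k, cnt U k = cnt V k + if u ≤ k then 1 else 0 := fun k => cnt_erase huU hu1 k
  have hVfull : ∀ k, u ≤ k → cnt V k = r - 1 := fun k hk => by
    rw [hV, cnt_eq_card (erase_max_subset' hU ⟨1, h1U⟩) hk,
      card_erase_of_mem (U.max'_mem ⟨1, h1U⟩), hr]
  have hVsub : ∀ k, cnt V k ≤ cnt U k := fun k => cnt_subset_le (erase_subset u U) k
  constructor
  · -- P admissible → Q admissible for the contraction
    rintro ⟨⟨⟨hend, hbelow⟩, hstep⟩, hdP⟩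
    rw [hlen] at hend
    have hdQ : diagCount Q = 0 := by rwa [diagCount_append Q _ htn] at hdP
    have hx : px P (Q.length+1) = n - r := congrArg Prod.fst hend
    have hy : py P (Q.length+1) = r := congrArg Prod.snd hend
    rw [px_concat] at hx
    rw [py_concat] at hy
    simp only [DStep.dx, DStep.dy] at hx hy
    have hx1 : 1 ≤ px Q Q.length := px_one_le Q Q.length
    have hy1 : 1 ≤ py Q Q.length := py_one_le Q Q.length
    have hr2 : 2 ≤ r := by omega
    have hrn : r ≤ n - 1 := by omega
    have hQend : pathPos (1,1) Q Q.length = ((n-1) - (r-1), r-1) := by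
      rw [pathPos_eq, Prod.mk.injEq]
      omega
    refine ⟨⟨⟨hQend, ?_⟩, ?_⟩, hdQ⟩
    · -- below path for V
      intro k hk
      have hcoord : pathPos (1,1) Q k = pathPos (1,1) P k := (pathPos_append_le hk).symm
      have hbel := hbelow k (by omega)
      rw [belowPath_iff] at hbel ⊢
      rw [hcoord]
      set w := (pathPos (1,1) P k).1 + (pathPos (1,1) P k).2 with hw
      by_cases hcase : u ≤ w
      · have h1 : cnt V w = r - 1 := hVfull w hcase
        have h2 : (pathPos (1,1) P k).2 = py P k := rfl
        have h3 : py P k = py Q k := py_append_le hk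
        have h4 : py Q k ≤ py Q Q.length := py_mono Q hk
        omega
      · have := hVcnt w
        simp only [hcase, if_false] at this
        omega
    · -- step conditions for Q
      intro k hk
      have hk' : k < P.length := by omega
      have hget : P.get ⟨k, hk'⟩ = Q.get ⟨k, hk⟩ := get_concat_lt' Q _ hk
      constructor
      · intro hQn
        have hPn : P.get ⟨k, hk'⟩ = DStep.north := by rw [hget]; exact hQn
        have e1 : py Q (k+1) = py Q k + 1 := by
          rw [py_succ Q hk, hQn]; simp [DStep.dy]
        have e2 : px Q (k+1) = px Q k := by
          rw [px_succ Q hk, hQn]; simp [DStep.dx]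
        rcases (hstep k hk').1 hPn with hreach | hnv
        · exfalso
          have : k + 1 = P.length := by
            apply reach_end P (by omega)
            rw [hreach, hlen]
            exact hend.symm
          omega
        · by_cases hk1 : k + 1 = Q.length
          · left
            rw [hk1]
            exact hQend
          · right
            have hcoord : pathPos (1,1) Q k = pathPos (1,1) P k := (pathPos_append_le (by omega)).symm
            rw [hcoord]
            intro hseg
            obtain ⟨hmem, hcnt⟩ := hseg
            set w := (pathPos (1,1) P k).1 + (pathPos (1,1) P k).2 + 1 with hw
            by_cases hcase : u ≤ w
            · -- w ∈ V and w ≥ max U forces w = u, impossible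
              have hwU : w ∈ U := mem_of_mem_erase hmem
              have : w ≤ u := le_max' U w hwU
              have hwu : w = u := by omega
              exact absurd hmem (hwu ▸ notMem_erase u U)
            · apply hnv
              refine ⟨mem_of_mem_erase hmem, ?_⟩
              have hcnt2 : cnt V w = (pathPos (1,1) P k).2 + 1 := hcnt
              have h9 := hVcnt w
              simp only [hcase, if_false] at h9
              show cnt U w = (pathPos (1,1) P k).2 + 1
              omega
      · intro hdiag
        exact absurd hdiag (get_ne_diag hdQ hk)
  · -- Q admissible for contraction → P admissible
    rintro ⟨⟨⟨hend, hbelow⟩, hstep⟩, hdQ⟩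
    have hx : px Q Q.length = (n-1) - (r-1) := congrArg Prod.fst hend
    have hy : py Q Q.length = r - 1 := congrArg Prod.snd hend
    have hx1 : 1 ≤ px Q Q.length := px_one_le Q Q.length
    have hy1 : 1 ≤ py Q Q.length := py_one_le Q Q.length
    have hr2 : 2 ≤ r := by omega
    have hrn : r ≤ n - 1 := by omega
    refine ⟨⟨⟨?_, ?_⟩, ?_⟩, by rwa [diagCount_append Q _ htn]⟩
    · rw [hlen, pathPos_eq, px_concat, py_concat]
      simp only [DStep.dx, DStep.dy]
      rw [Prod.mk.injEq]
      omega
    · intro k hk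
      rw [hlen] at hk
      by_cases hkL : k ≤ Q.length
      · rw [pathPos_append_le hkL, belowPath_iff]
        have hbel := hbelow k hkL
        rw [belowPath_iff] at hbel
        have := hVsub ((pathPos (1,1) Q k).1 + (pathPos (1,1) Q k).2)
        omega
      · have hkL1 : k = Q.length + 1 := by omega
        subst hkL1
        rw [belowPath_iff, pathPos_eq, px_concat, py_concat]
        simp only [DStep.dx, DStep.dy]
        have harg : px Q Q.length + 0 + (py Q Q.length + 1) = n := by omega
        rw [harg, cnt_eq_card hU le_rfl, hr]
        omega
    · intro k hk
      rw [hlen] at hk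
      by_cases hkL : k < Q.length
      · have hget : P.get ⟨k, by omega⟩ = Q.get ⟨k, hkL⟩ := get_concat_lt' Q _ hkL
        constructor
        · intro hPn
          rw [hget] at hPn
          have e1 : py Q (k+1) = py Q k + 1 := by
            rw [py_succ Q hkL, hPn]; simp [DStep.dy]
          have e2 : px Q (k+1) = px Q k := by
            rw [px_succ Q hkL, hPn]; simp [DStep.dx]
          rcases (hstep k hkL).1 hPn with hreach | hnv
          · -- the last step of Q: but for P this is not the final point
            have hk1 : k + 1 = Q.length := by
              apply reach_end Q (by omega)
              rw [hreach]
              exact hend.symm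
            right
            have hcoord : pathPos (1,1) P k = pathPos (1,1) Q k := pathPos_append_le (by omega)
            rw [hcoord]
            intro hseg
            obtain ⟨hmem, hcnt⟩ := hseg
            have e3 : py Q (k+1) = r - 1 := by rw [hk1]; exact hy
            have e4 : px Q (k+1) = (n-1) - (r-1) := by rw [hk1]; exact hx
            have f1 : (pathPos (1,1) Q k).1 = px Q k := rfl
            have f2 : (pathPos (1,1) Q k).2 = py Q k := rfl
            have harg : (pathPos (1,1) Q k).1 + (pathPos (1,1) Q k).2 + 1 = n - 1 := by omega
            rw [harg] at hmem hcnt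
            have hcnt2 : cnt U (n-1) = (pathPos (1,1) Q k).2 + 1 := hcnt
            have h9 := hUfull (n-1) hun
            omega
          · right
            have hcoord : pathPos (1,1) P k = pathPos (1,1) Q k := pathPos_append_le (by omega)
            rw [hcoord]
            intro hseg
            obtain ⟨hmem, hcnt⟩ := hseg
            set w := (pathPos (1,1) Q k).1 + (pathPos (1,1) Q k).2 + 1 with hw
            by_cases hcase : u ≤ w
            · -- then cnt U w = r, so y = r - 1; impossible before the last step
              have h8 := hUfull w hcase
              have hcnt2 : cnt U w = (pathPos (1,1) Q k).2 + 1 := hcnt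
              have f2 : (pathPos (1,1) Q k).2 = py Q k := rfl
              have h4 : py Q (k+1) ≤ py Q Q.length := py_mono Q (by omega)
              omega
            · apply hnv
              have hwu : w ≠ u := by omega
              refine ⟨mem_erase.mpr ⟨hwu, hmem⟩, ?_⟩
              have hcnt2 : cnt U w = (pathPos (1,1) Q k).2 + 1 := hcnt
              have h9 := hVcnt w
              simp only [hcase, if_false] at h9
              show cnt V w = (pathPos (1,1) Q k).2 + 1
              omega
        · intro hdiag
          rw [hget] at hdiag
          exact absurd hdiag (get_ne_diag hdQ hkL)
      · have hkL1 : k = Q.length := by omega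
        subst hkL1
        have hget : P.get ⟨Q.length, by omega⟩ = DStep.north := get_concat_last' Q _
        constructor
        · intro _
          left
          rw [pathPos_eq, px_concat, py_concat]
          simp only [DStep.dx, DStep.dy]
          rw [Prod.mk.injEq]
          omega
        · intro hPd
          rw [hget] at hPd
          exact absurd hPd (fun h => DStep.noConfusion h)

end TransferN

section Assemble
open Finset

def APaths (n r : ℕ) (U : Finset ℕ) : Set (List DStep) :=
  {P | IsAdmissible n r U P ∧ diagCount P = 0}

lemma APaths_finite (n r : ℕ) (U : Finset ℕ) : (APaths n r U).Finite := by
  apply Set.Finite.subset (List.finite_length_le DStep (n + r))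
  intro P hP
  obtain ⟨⟨⟨hend, _⟩, _⟩, _⟩ := hP
  have hx : px P P.length = n - r := congrArg Prod.fst hend
  have hy : py P P.length = r := congrArg Prod.snd hend
  have hg := growth P (Nat.zero_le P.length) le_rfl
  rw [px_zero, py_zero] at hg
  simp only [Set.mem_setOf_eq]
  omega

lemma APaths_zero (m : ℕ) : APaths m 0 ∅ = ∅ := by
  rw [Set.eq_empty_iff_forall_notMem]
  intro Q hQ
  obtain ⟨⟨⟨hend, _⟩, _⟩, _⟩ := hQ
  have hy : py Q Q.length = 0 := congrArg Prod.snd hend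
  have := py_one_le Q Q.length
  omega

lemma APaths_split_A {U : Finset ℕ} {n r : ℕ} (hU : U ⊆ Icc 1 n) (hr : U.card = r)
    (h1U : 1 ∈ U) (hnU : n ∉ U) (hn1U : n - 1 ∉ U) (hn : 3 ≤ n) :
    APaths n r U = ((· ++ [DStep.east]) '' APaths (n-1) r U)
      ∪ ((· ++ [DStep.north]) '' APaths (n-1) (r-1) (U.erase (U.max' ⟨1, h1U⟩))) := by
  ext P
  simp only [Set.mem_union, Set.mem_image]
  constructor
  · intro hP
    have hPne : P ≠ [] := by
      intro he
      obtain ⟨⟨⟨hend, _⟩, _⟩, _⟩ := hP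
      subst he
      have hx : px ([] : List DStep) 0 = n - r := congrArg Prod.fst hend
      have hy : py ([] : List DStep) 0 = r := congrArg Prod.snd hend
      rw [px_zero] at hx
      rw [py_zero] at hy
      omega
    obtain ⟨Q, t, hQt⟩ : ∃ Q t, P = Q ++ [t] :=
      ⟨P.dropLast, P.getLast hPne, (List.dropLast_append_getLast hPne).symm⟩
    subst hQt
    have hT : t ≠ DStep.diag := by
      have hd := hP.2
      have h9 := get_ne_diag hd (show Q.length < (Q ++ [t]).length by simp)
      rwa [get_concat_last' Q t] at h9
    cases t with
    | east => exact Or.inl ⟨Q, (append_east_iff hU hr hnU hn1U hn Q).mp hP, rfl⟩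
    | north => exact Or.inr ⟨Q, (append_north_iff hU hr h1U hnU hn Q).mp hP, rfl⟩
    | diag => exact absurd rfl hT
  · rintro (⟨Q, hQ, rfl⟩ | ⟨Q, hQ, rfl⟩)
    · exact (append_east_iff hU hr hnU hn1U hn Q).mpr hQ
    · exact (append_north_iff hU hr h1U hnU hn Q).mpr hQ

lemma APaths_split_B {U : Finset ℕ} {n r : ℕ} (hU : U ⊆ Icc 1 n) (hr : U.card = r)
    (h1U : 1 ∈ U) (hnU : n ∉ U) (hn1U : n - 1 ∈ U) (hn : 3 ≤ n) :
    APaths n r U = (· ++ [DStep.north]) '' APaths (n-1) (r-1) (U.erase (U.max' ⟨1, h1U⟩)) := by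
  ext P
  simp only [Set.mem_image]
  constructor
  · intro hP
    have hPne : P ≠ [] := by
      intro he
      obtain ⟨⟨⟨hend, _⟩, _⟩, _⟩ := hP
      subst he
      have hx : px ([] : List DStep) 0 = n - r := congrArg Prod.fst hend
      have hy : py ([] : List DStep) 0 = r := congrArg Prod.snd hend
      rw [px_zero] at hx
      rw [py_zero] at hy
      omega
    obtain ⟨Q, t, hQt⟩ : ∃ Q t, P = Q ++ [t] :=
      ⟨P.dropLast, P.getLast hPne, (List.dropLast_append_getLast hPne).symm⟩
    subst hQt
    have hT : t ≠ DStep.diag := by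
      have hd := hP.2
      have h9 := get_ne_diag hd (show Q.length < (Q ++ [t]).length by simp)
      rwa [get_concat_last' Q t] at h9
    cases t with
    | east => exact absurd hP (append_east_not hU hr h1U hnU hn1U hn Q)
    | north => exact ⟨Q, (append_north_iff hU hr h1U hnU hn Q).mp hP, rfl⟩
    | diag => exact absurd rfl hT
  · rintro ⟨Q, hQ, rfl⟩
    exact (append_north_iff hU hr h1U hnU hn Q).mpr hQ

lemma inj_concat (t : DStep) : Function.Injective (· ++ [t] : List DStep → List DStep) :=
  fun _ _ h => List.append_cancel_right h

lemma beta_small : betaInv (Finset.Icc 1 1) (schubertBases 1 1 {1}) = 1 := by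
  have hU : ({1} : Finset ℕ) ⊆ Icc 1 1 := by
    intro x hx
    rw [mem_singleton] at hx
    subst hx
    rw [mem_Icc]
    omega
  have hr : ({1} : Finset ℕ).card = 1 := card_singleton 1
  have h0 : famRank (schubertBases 1 1 {1}) ∅ = 0 := by
    apply Nat.le_zero.mp
    apply famRank_le
    intro B _
    simp
  have h1 : famRank (schubertBases 1 1 {1}) {1} = 1 := by
    apply le_antisymm
    · apply famRank_le
      intro B _
      calc ({1} ∩ B).card ≤ ({1} : Finset ℕ).card := card_le_card inter_subset_left
        _ = 1 := card_singleton 1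
    · have := le_famRank (A := {1}) (self_mem_SB hU hr)
      rwa [inter_self, card_singleton] at this
  unfold betaInv
  rw [famRank_ground hU hr, Finset.Icc_self,
    (by decide : ({1} : Finset ℕ).powerset = {∅, {1}}),
    Finset.sum_pair (by decide : (∅ : Finset ℕ) ≠ {1})]
  rw [h0, h1, card_empty, card_singleton]
  norm_num

lemma base_adm : IsAdmissible 2 1 {1} [] ∧ diagCount [] = 0 := by
  refine ⟨⟨⟨?_, ?_⟩, ?_⟩, rfl⟩
  · show pathPos (1,1) [] 0 = (2 - 1, 1)
    simp [pathPos]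
  · intro k hk
    have hk0 : k = 0 := by simpa using hk
    subst hk0
    rw [belowPath_iff]
    have h9 : 1 ≤ cnt {1} (1 + 1) := mem_cnt_ge (mem_singleton_self 1) le_rfl (by omega)
    simpa [pathPos] using h9
  · intro k hk
    simp at hk

lemma base_paths : APaths 2 1 {1} = {([] : List DStep)} := by
  ext P
  simp only [Set.mem_singleton_iff]
  constructor
  · intro hP
    obtain ⟨⟨⟨hend, _⟩, _⟩, _⟩ := hP
    have hx : px P P.length = 2 - 1 := congrArg Prod.fst hend
    have hy : py P P.length = 1 := congrArg Prod.snd hend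
    have hg := growth P (Nat.zero_le P.length) le_rfl
    rw [px_zero, py_zero] at hg
    have : P.length = 0 := by omega
    exact List.length_eq_zero_iff.mp this
  · rintro rfl
    exact base_adm

theorem main (n : ℕ) : ∀ U : Finset ℕ, 2 ≤ n → U ⊆ Finset.Icc 1 n → 1 ∈ U → n ∉ U →
    betaInv (Finset.Icc 1 n) (schubertBases n U.card U) = ((APaths n U.card U).ncard : ℤ) := by
  induction n using Nat.strong_induction_on with
  | _ n IH =>
    intro U hn hU h1U hnU
    have hr1 : 1 ≤ U.card := card_pos.mpr ⟨1, h1U⟩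
    by_cases hn2 : n = 2
    · subst hn2
      have hUeq : U = {1} := by
        ext x
        rw [mem_singleton]
        constructor
        · intro hx
          have h9 := mem_Icc.mp (hU hx)
          have : x ≠ 2 := fun he => hnU (he ▸ hx)
          omega
        · rintro rfl
          exact h1U
      subst hUeq
      rw [card_singleton]
      have h1' : (1 : ℕ) ∈ ({1} : Finset ℕ) := mem_singleton_self 1
      have e1 := beta_del_con (U := {1}) (n := 2) (r := 1)
        (by intro x hx; rw [mem_singleton] at hx; subst hx; rw [mem_Icc]; omega)
        (card_singleton 1) h1' (by simp) le_rfl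
      have hmax : ∀ (h : ({1} : Finset ℕ).Nonempty), ({1} : Finset ℕ).max' h = 1 := by
        intro h
        apply le_antisymm
        · apply Finset.max'_le
          intro y hy
          rw [mem_singleton] at hy
          omega
        · exact Finset.le_max' _ _ (mem_singleton_self 1)
      rw [hmax ⟨1, h1'⟩, Finset.erase_singleton] at e1
      rw [show (2:ℕ) - 1 = 1 from rfl, show (1:ℕ) - 1 = 0 from rfl] at e1
      rw [e1, beta_small, beta_rank_zero, add_zero, base_paths, Set.ncard_singleton]
      norm_num
    · -- inductive step, n ≥ 3
      have hn3 : 3 ≤ n := by omega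
      have hrcard : U.card = U.card := rfl
      have e1 := beta_del_con hU hrcard h1U hnU (by omega)
      have huU : U.max' ⟨1, h1U⟩ ∈ U := U.max'_mem _
      have hVsub : U.erase (U.max' ⟨1, h1U⟩) ⊆ Icc 1 (n-1) := erase_max_subset hU _
      have hVcard : (U.erase (U.max' ⟨1, h1U⟩)).card = U.card - 1 :=
        card_erase_of_mem huU
      have hn1V : n - 1 ∉ U.erase (U.max' ⟨1, h1U⟩) := by
        intro h
        have h2 : n - 1 ∈ U := mem_of_mem_erase h
        have h3 : n - 1 ≤ U.max' ⟨1, h1U⟩ := le_max' U _ h2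
        have h4 := mem_Icc.mp (hU huU)
        have h5 : U.max' ⟨1, h1U⟩ ≠ n := fun he => hnU (he ▸ huU)
        have h6 : n - 1 = U.max' ⟨1, h1U⟩ := by omega
        exact (ne_of_mem_erase h) h6
      by_cases hc : n - 1 ∈ U
      · -- deletion has a coloop: β(del) = 0, east paths impossible
        have hβdel : betaInv (Icc 1 (n-1)) (schubertBases (n-1) U.card U) = 0 :=
          beta_coloop (subset_pred hU hnU) hrcard hc (by omega)
        have hr2 : 2 ≤ U.card := by
          have hsub : ({1, n-1} : Finset ℕ) ⊆ U := by
            intro x hx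
            rcases mem_insert.mp hx with rfl | hx
            · exact h1U
            · rw [mem_singleton] at hx
              exact hx ▸ hc
          have h9 := card_le_card hsub
          rw [Finset.card_pair (by omega)] at h9
          exact h9
        have hu2 : 2 ≤ U.max' ⟨1, h1U⟩ := by
          have := le_max' U _ hc
          omega
        have h1V : 1 ∈ U.erase (U.max' ⟨1, h1U⟩) := mem_erase.mpr ⟨by omega, h1U⟩
        have hIH := IH (n-1) (by omega) (U.erase (U.max' ⟨1, h1U⟩)) (by omega) hVsub h1V hn1V
        rw [hVcard] at hIH
        have hsplit := APaths_split_B hU hrcard h1U hnU hc hn3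
        rw [e1, hβdel, hIH, zero_add, hsplit,
          Set.ncard_image_of_injective _ (inj_concat DStep.north)]
      · have hβdel := IH (n-1) (by omega) U (by omega) (subset_pred hU hnU) h1U hc
        have hsplit := APaths_split_A hU hrcard h1U hnU hc hn3
        by_cases hr1' : U.card = 1
        · have hVe : U.erase (U.max' ⟨1, h1U⟩) = ∅ := by
            apply card_eq_zero.mp
            omega
          have hβcon : betaInv (Icc 1 (n-1))
              (schubertBases (n-1) (U.card - 1) (U.erase (U.max' ⟨1, h1U⟩))) = 0 := by
            rw [hVe, hr1']
            exact beta_rank_zero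
          have hpathN : APaths (n-1) (U.card - 1) (U.erase (U.max' ⟨1, h1U⟩)) = ∅ := by
            rw [hVe, hr1']
            exact APaths_zero (n-1)
          rw [e1, hβcon, hβdel, add_zero, hsplit, hpathN, Set.image_empty, Set.union_empty,
            Set.ncard_image_of_injective _ (inj_concat DStep.east)]
        · have hr2 : 2 ≤ U.card := by omega
          have hu2 : 2 ≤ U.max' ⟨1, h1U⟩ := by
            obtain ⟨x, hxU, hx1⟩ := Finset.exists_mem_ne (s := U) (by omega) 1
            have h8 := le_max' U _ hxU
            have h9 := mem_Icc.mp (hU hxU)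
            omega
          have h1V : 1 ∈ U.erase (U.max' ⟨1, h1U⟩) := mem_erase.mpr ⟨by omega, h1U⟩
          have hIHc := IH (n-1) (by omega) (U.erase (U.max' ⟨1, h1U⟩)) (by omega) hVsub h1V hn1V
          rw [hVcard] at hIHc
          have hdisj : Disjoint ((· ++ [DStep.east]) '' APaths (n-1) U.card U)
              ((· ++ [DStep.north]) '' APaths (n-1) (U.card - 1) (U.erase (U.max' ⟨1, h1U⟩))) := by
            rw [Set.disjoint_left]
            rintro P ⟨Q1, _, h1⟩ ⟨Q2, _, h2⟩
            have h3 : Q1 ++ [DStep.east] = Q2 ++ [DStep.north] := h1.trans h2.symm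
            have h4 := congrArg List.getLast? h3
            rw [List.getLast?_concat, List.getLast?_concat] at h4
            exact DStep.noConfusion (Option.some.inj h4)
          rw [e1, hβdel, hIHc, hsplit,
            Set.ncard_union_eq hdisj ((APaths_finite _ _ _).image _) ((APaths_finite _ _ _).image _),
            Set.ncard_image_of_injective _ (inj_concat DStep.east),
            Set.ncard_image_of_injective _ (inj_concat DStep.north)]
          push_cast
          ring

end Assemble


/-- For a loopless and coloopless Schubert matroid `SM(U)` on `[n]`
of rank `r`, with `n ≥ 2`, the β-invariant equals the number of admissible Delannoy
paths associated to `SM(U)` having no diagonal steps. -/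
theorem statement6 (n r : ℕ) (hn : 2 ≤ n) (U : Finset ℕ) (hUsub : U ⊆ Finset.Icc 1 n)
    (hUcard : U.card = r)
    (hloopless : ∀ e ∈ Finset.Icc 1 n, ∃ B ∈ schubertBases n r U, e ∈ B)
    (hcoloopless : ∀ e ∈ Finset.Icc 1 n, ∃ B ∈ schubertBases n r U, e ∉ B) :
    betaInv (Finset.Icc 1 n) (schubertBases n r U)
      = ({P : List DStep | IsAdmissible n r U P ∧ diagCount P = 0}.ncard : ℤ) := by
  subst hUcard
  have h1U : 1 ∈ U := by
    obtain ⟨B, hB, h1B⟩ := hloopless 1 (Finset.mem_Icc.mpr ⟨le_rfl, by omega⟩)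
    obtain ⟨hBsub, hBcard, hBcnt⟩ := (mem_SB_iff hUsub rfl).mp hB
    have h9 : 1 ≤ cnt B 1 := mem_cnt_ge h1B le_rfl le_rfl
    have h8 := hBcnt 1
    exact one_mem_of_cnt (by omega)
  have hnU : n ∉ U := by
    intro hmem
    obtain ⟨B, hB, hnB⟩ := hcoloopless n (Finset.mem_Icc.mpr ⟨by omega, le_rfl⟩)
    exact hnB (top_mem_basis hUsub rfl hmem hB)
  exact main n U hn hUsub h1U hnU
end GPoly
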